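/- arXiv:2604.21888 — 7 statements merged into one kernel-verified Lean document; each statement's English description precedes it below -/
import Mathlib

section
/- For every integer k ≥ 1 there exists N such that for all n ≥ N, the Kneser graph KG(Perm_n) of the permutohedron contains the kth power of a Hamiltonian cycle. -/
/-- The set `[k] = {1, …, k}` viewed inside `Fin n` (with `Fin n` representing
`{1, …, n}` via `i ↦ i + 1`): the first `k` elements. -/
def firstK (n k : ℕ) : Set (Fin n) := {i : Fin n | (i : ℕ) < k}

/-- The Kneser graph of the permutohedron: vertices are the permutations of
`{1, …, n}`, and `σ, τ` are adjacent iff there is no `k` with `1 ≤ k ≤ n - 1`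
such that `σ⁻¹([k]) = τ⁻¹([k])`. -/
def KGPerm (n : ℕ) : SimpleGraph (Equiv.Perm (Fin n)) where
  Adj σ τ := σ ≠ τ ∧
    ∀ k : ℕ, 1 ≤ k → k ≤ n - 1 → (⇑σ) ⁻¹' (firstK n k) ≠ (⇑τ) ⁻¹' (firstK n k)
  symm := ⟨fun σ τ h => ⟨h.1.symm, fun k hk1 hk2 => (h.2 k hk1 hk2).symm⟩⟩
  loopless := ⟨fun σ h => h.1 rfl⟩

/-- A graph `G` on `N` vertices contains the `k`-th power of a Hamiltonian cycle if
there is a cyclic enumeration of its vertices (a bijection `ZMod N ≃ V`) such that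
`v i` is adjacent to `v (i + j)` for all `i` and all `1 ≤ j ≤ k`. -/
def ContainsHamPower {V : Type*} (G : SimpleGraph V) (k : ℕ) : Prop :=
  ∃ v : ZMod (Nat.card V) ≃ V,
    ∀ (i : ZMod (Nat.card V)) (j : ℕ), 1 ≤ j → j ≤ k →
      G.Adj (v i) (v (i + (j : ZMod (Nat.card V))))

open Equiv Nat
open Fin.NatCast Fin.CommRing

/-- Embedding of `Perm (Fin N)` into `Perm (Fin (N+1))` fixing `0`, shifting by `succ`. -/
def permSucc {N : ℕ} (σ : Perm (Fin N)) : Perm (Fin (N+1)) where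
  toFun := fun z => Fin.cases 0 (fun y => (σ y).succ) z
  invFun := fun z => Fin.cases 0 (fun y => (σ⁻¹ y).succ) z
  left_inv := by
    intro z
    induction z using Fin.cases with
    | zero => simp
    | succ y => simp
  right_inv := by
    intro z
    induction z using Fin.cases with
    | zero => simp
    | succ y => simp

@[simp] lemma permSucc_zero {N : ℕ} (σ : Perm (Fin N)) : permSucc σ 0 = 0 := rfl

@[simp] lemma permSucc_succ {N : ℕ} (σ : Perm (Fin N)) (y : Fin N) :
    permSucc σ y.succ = (σ y).succ := by
  simp [permSucc]

lemma permSucc_mul {N : ℕ} (σ τ : Perm (Fin N)) :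
    permSucc (σ * τ) = permSucc σ * permSucc τ := by
  ext z
  induction z using Fin.cases with
  | zero => simp
  | succ y => simp

lemma permSucc_inj {N : ℕ} {σ τ : Perm (Fin N)} (h : permSucc σ = permSucc τ) : σ = τ := by
  ext y
  have := congrArg (fun π : Perm (Fin (N+1)) => π y.succ) h
  exact congrArg Fin.val (Fin.succ_injective _ (by simpa using this))

lemma permSucc_swap {N : ℕ} (x y : Fin N) :
    permSucc (Equiv.swap x y) = Equiv.swap x.succ y.succ := by
  ext z
  induction z using Fin.cases with
  | zero =>
      rw [Equiv.swap_apply_of_ne_of_ne (Fin.succ_ne_zero x).symm (Fin.succ_ne_zero y).symm]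
      simp
  | succ w =>
      rcases eq_or_ne w x with rfl | hx
      · simp [Equiv.swap_apply_left]
      rcases eq_or_ne w y with rfl | hy
      · simp [Equiv.swap_apply_right]
      · rw [permSucc_succ, Equiv.swap_apply_of_ne_of_ne hx hy,
          Equiv.swap_apply_of_ne_of_ne (fun h => hx (Fin.succ_injective _ h))
            (fun h => hy (Fin.succ_injective _ h))]

/-- Embedding of `Perm (Fin N)` into `Perm (Fin (N+1))` fixing `last`, via `castSucc`. -/
def permCast {N : ℕ} (σ : Perm (Fin N)) : Perm (Fin (N+1)) where
  toFun := fun z => Fin.lastCases (Fin.last N) (fun y => (σ y).castSucc) z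
  invFun := fun z => Fin.lastCases (Fin.last N) (fun y => (σ⁻¹ y).castSucc) z
  left_inv := by
    intro z
    induction z using Fin.lastCases with
    | last => simp
    | cast y => simp
  right_inv := by
    intro z
    induction z using Fin.lastCases with
    | last => simp
    | cast y => simp

@[simp] lemma permCast_last {N : ℕ} (σ : Perm (Fin N)) : permCast σ (Fin.last N) = Fin.last N := by
  simp [permCast]

@[simp] lemma permCast_castSucc {N : ℕ} (σ : Perm (Fin N)) (y : Fin N) :
    permCast σ y.castSucc = (σ y).castSucc := by
  simp [permCast]

lemma permCast_mul {N : ℕ} (σ τ : Perm (Fin N)) :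
    permCast (σ * τ) = permCast σ * permCast τ := by
  ext z
  induction z using Fin.lastCases with
  | last => simp
  | cast y => simp

lemma permCast_inj {N : ℕ} {σ τ : Perm (Fin N)} (h : permCast σ = permCast τ) : σ = τ := by
  ext y
  have := congrArg (fun π : Perm (Fin (N+1)) => π y.castSucc) h
  exact congrArg Fin.val (Fin.castSucc_injective _ (by simpa using this))

lemma permCast_swap {N : ℕ} (x y : Fin N) :
    permCast (Equiv.swap x y) = Equiv.swap x.castSucc y.castSucc := by
  ext z
  induction z using Fin.lastCases with
  | last =>
      rw [Equiv.swap_apply_of_ne_of_ne (Fin.castSucc_lt_last x).ne' (Fin.castSucc_lt_last y).ne']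
      simp
  | cast w =>
      rcases eq_or_ne w x with rfl | hx
      · simp [Equiv.swap_apply_left]
      rcases eq_or_ne w y with rfl | hy
      · simp [Equiv.swap_apply_right]
      · rw [permCast_castSucc, Equiv.swap_apply_of_ne_of_ne hx hy,
          Equiv.swap_apply_of_ne_of_ne (fun h => hx (Fin.castSucc_injective _ h))
            (fun h => hy (Fin.castSucc_injective _ h))]

/-- adjacent position swap in `Fin (m+1)` -/
def sstep (m p : ℕ) : Perm (Fin (m+1)) :=
  Equiv.swap ((p : ℕ) : Fin (m+1)) (((p+1 : ℕ)) : Fin (m+1))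

/-- partial down-sweep permutation -/
def delta (m e : ℕ) : Perm (Fin (m+1)) :=
  ((List.range e).map (fun d => sstep m (m - 1 - d))).prod

lemma delta_zero (m : ℕ) : delta m 0 = 1 := rfl

lemma delta_succ (m e : ℕ) : delta m (e+1) = delta m e * sstep m (m - 1 - e) := by
  unfold delta
  rw [List.range_succ, List.map_append, List.prod_append]
  simp

lemma fincast_val (m z : ℕ) (h : z ≤ m) : ((z : Fin (m+1))).val = z :=
  Fin.val_cast_of_lt (by omega)

lemma sstep_left (m p : ℕ) (hp : p + 1 ≤ m) :
    sstep m p ((p : ℕ) : Fin (m+1)) = ((p+1 : ℕ) : Fin (m+1)) := Equiv.swap_apply_left _ _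

lemma sstep_right (m p : ℕ) (hp : p + 1 ≤ m) :
    sstep m p ((p+1 : ℕ) : Fin (m+1)) = ((p : ℕ) : Fin (m+1)) := Equiv.swap_apply_right _ _

lemma sstep_fix (m p z : ℕ) (hp : p + 1 ≤ m) (hz : z ≤ m) (h1 : z ≠ p) (h2 : z ≠ p + 1) :
    sstep m p ((z : ℕ) : Fin (m+1)) = ((z : ℕ) : Fin (m+1)) := by
  apply Equiv.swap_apply_of_ne_of_ne
  · intro h; apply h1
    have := congrArg Fin.val h
    rwa [fincast_val m z hz, fincast_val m p (by omega)] at this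
  · intro h; apply h2
    have := congrArg Fin.val h
    rwa [fincast_val m z hz, fincast_val m (p+1) (by omega)] at this

-- (A): delta m e sends m-e to last
lemma delta_apply_top (m : ℕ) : ∀ e, e ≤ m →
    delta m e (((m - e : ℕ)) : Fin (m+1)) = Fin.last m := by
  intro e
  induction e with
  | zero =>
      intro _
      simp only [Nat.sub_zero, delta_zero, Perm.one_apply]
      apply Fin.ext
      rw [fincast_val m m le_rfl]
      rfl
  | succ e ih =>
      intro he
      rw [delta_succ, Perm.mul_apply]
      have h1 : m - (e+1) = m - 1 - e := by omega
      have h2 : (m - 1 - e) + 1 = m - e := by omega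
      rw [h1, sstep_left m (m-1-e) (by omega), h2, ih (by omega)]

-- (F): delta fixes small values
lemma delta_fix (m : ℕ) : ∀ e, e ≤ m → ∀ z : ℕ, z < m - e →
    delta m e ((z : ℕ) : Fin (m+1)) = ((z : ℕ) : Fin (m+1)) := by
  intro e
  induction e with
  | zero => intro _ z _; simp [delta_zero]
  | succ e ih =>
      intro he z hz
      rw [delta_succ, Perm.mul_apply, sstep_fix m (m-1-e) z (by omega) (by omega) (by omega) (by omega),
        ih (by omega) z (by omega)]

-- (G): delta shifts large values down by one
lemma delta_shift (m : ℕ) : ∀ e, e ≤ m → ∀ z : ℕ, m - e < z → z ≤ m →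
    delta m e ((z : ℕ) : Fin (m+1)) = ((z - 1 : ℕ) : Fin (m+1)) := by
  intro e
  induction e with
  | zero => intro _ z h1 h2; omega
  | succ e ih =>
      intro he z hz1 hz2
      rw [delta_succ, Perm.mul_apply]
      rcases eq_or_lt_of_le (show m - (e+1) + 1 ≤ z by omega) with h | h
      · have hz : z = (m - 1 - e) + 1 := by omega
        rw [hz, sstep_right m (m-1-e) (by omega)]
        rw [delta_fix m e (by omega) (m-1-e) (by omega)]
        norm_num
      · rw [sstep_fix m (m-1-e) z (by omega) (by omega) (by omega) (by omega),
          ih (by omega) z (by omega) hz2]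

def SJTProp (m : ℕ) : Prop :=
  ∃ V : ZMod (m !) ≃ Perm (Fin m), ∀ t : ZMod (m !), ∃ (x : ℕ) (h : x + 1 < m),
    V (t + 1) = V t * Equiv.swap ⟨x, Nat.lt_of_succ_lt h⟩ ⟨x + 1, h⟩

lemma sjt_two : SJTProp 2 := by
  show ∃ V : ZMod 2 ≃ Perm (Fin 2), ∀ t : ZMod 2, ∃ (x : ℕ) (h : x + 1 < 2),
    V (t + 1) = V t * Equiv.swap ⟨x, Nat.lt_of_succ_lt h⟩ ⟨x + 1, h⟩
  have hbij : Function.Bijective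
      (fun t : ZMod 2 => if t = 0 then (1 : Perm (Fin 2)) else Equiv.swap 0 1) := by decide
  refine ⟨Equiv.ofBijective _ hbij, ?_⟩
  intro t
  refine ⟨0, by norm_num, ?_⟩
  show (if t + 1 = 0 then (1 : Perm (Fin 2)) else Equiv.swap 0 1)
      = (if t = 0 then (1 : Perm (Fin 2)) else Equiv.swap 0 1) * Equiv.swap ⟨0, _⟩ ⟨1, _⟩
  revert t; decide

lemma sstep_eq_mk (m p : ℕ) (h : p + 1 < m + 1) :
    sstep m p = Equiv.swap ⟨p, Nat.lt_of_succ_lt h⟩ ⟨p + 1, h⟩ := by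
  unfold sstep
  congr 1 <;> apply Fin.ext
  · exact Fin.val_cast_of_lt (by omega)
  · exact Fin.val_cast_of_lt h

lemma sjt_step (m : ℕ) (hm : 2 ≤ m) (h : SJTProp m) : SJTProp (m + 1) := by
  obtain ⟨V, hV⟩ := h
  haveI : NeZero (m !) := ⟨(Nat.factorial_pos m).ne'⟩
  haveI : NeZero ((m + 1)!) := ⟨(Nat.factorial_pos (m + 1)).ne'⟩
  set f : ZMod ((m + 1)!) → Perm (Fin (m + 1)) := fun t =>
    permCast (V (((t.val / (m + 1) : ℕ) : ZMod (m !)))) *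
      delta m (if Even (t.val / (m + 1)) then t.val % (m + 1) else m - t.val % (m + 1)) with hf
  have hMfac : (m + 1)! = (m + 1) * m ! := Nat.factorial_succ m
  have hEle : ∀ a : ℕ, (if Even (a / (m + 1)) then a % (m + 1) else m - a % (m + 1)) ≤ m := by
    intro a
    have : a % (m + 1) < m + 1 := Nat.mod_lt _ (by omega)
    split <;> omega
  -- injectivity
  have hinj : Function.Injective f := by
    intro t t' heq
    simp only [hf] at heq
    set a := t.val with ha
    set a' := t'.val with ha'
    set e := if Even (a / (m + 1)) then a % (m + 1) else m - a % (m + 1) with he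
    set e' := if Even (a' / (m + 1)) then a' % (m + 1) else m - a' % (m + 1) with he'
    -- step 1 : e = e'
    have hee : e = e' := by
      have h1 := congrArg (fun π : Perm (Fin (m + 1)) => π (((m - e : ℕ)) : Fin (m + 1))) heq
      simp only [Perm.mul_apply] at h1
      rw [delta_apply_top m e (hEle a)] at h1
      rw [permCast_last] at h1
      have h2 : delta m e' (((m - e : ℕ)) : Fin (m + 1)) = Fin.last m := by
        apply (permCast (V (((a' / (m + 1) : ℕ) : ZMod (m !))))).injective
        rw [← h1, permCast_last]
      have h3 := delta_apply_top m e' (hEle a')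
      have h4 := (delta m e').injective (h2.trans h3.symm)
      have h5 := congrArg Fin.val h4
      rw [fincast_val m (m - e) (by omega), fincast_val m (m - e') (by omega)] at h5
      have := hEle a; have := hEle a'
      rw [← he] at *
      omega
    rw [← hee] at heq
    have hcancel : permCast (V (((a / (m + 1) : ℕ) : ZMod (m !)))) =
        permCast (V (((a' / (m + 1) : ℕ) : ZMod (m !)))) := by
      exact mul_right_cancel heq
    have hVeq := permCast_inj hcancel
    have hieq : ((a / (m + 1) : ℕ) : ZMod (m !)) = ((a' / (m + 1) : ℕ) : ZMod (m !)) :=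
      V.injective hVeq
    have hia : a / (m + 1) < m ! := by
      have : a < (m + 1) * m ! := by rw [← hMfac]; exact ZMod.val_lt t
      exact Nat.div_lt_of_lt_mul (by omega)
    have hia' : a' / (m + 1) < m ! := by
      have : a' < (m + 1) * m ! := by rw [← hMfac]; exact ZMod.val_lt t'
      exact Nat.div_lt_of_lt_mul (by omega)
    have hdiv : a / (m + 1) = a' / (m + 1) := by
      have := congrArg ZMod.val hieq
      rwa [ZMod.val_cast_of_lt hia, ZMod.val_cast_of_lt hia'] at this
    have hmod : a % (m + 1) = a' % (m + 1) := by
      have hb1 : a % (m + 1) < m + 1 := Nat.mod_lt _ (by omega)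
      have hb2 : a' % (m + 1) < m + 1 := Nat.mod_lt _ (by omega)
      rw [he, he', hdiv] at hee
      split at hee <;> omega
    apply ZMod.val_injective
    have d1 := Nat.div_add_mod a (m + 1)
    have d2 := Nat.div_add_mod a' (m + 1)
    have d3 : (m + 1) * (a / (m + 1)) = (m + 1) * (a' / (m + 1)) := by rw [hdiv]
    rw [← ha, ← ha']
    omega
  have hbij : Function.Bijective f := by
    rw [Fintype.bijective_iff_injective_and_card]
    refine ⟨hinj, ?_⟩
    rw [ZMod.card, Fintype.card_perm, Fintype.card_fin]
  refine ⟨Equiv.ofBijective f hbij, ?_⟩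
  intro t
  have hof : ∀ s, Equiv.ofBijective f hbij s = f s := fun _ => rfl
  haveI : Fact (1 < (m + 1)!) := ⟨by
    have := Nat.self_le_factorial (m + 1); omega⟩
  have ha : t.val < (m + 1)! := ZMod.val_lt t
  have hd : t.val % (m + 1) < m + 1 := Nat.mod_lt _ (by omega)
  have hadm : (m + 1) * (t.val / (m + 1)) + t.val % (m + 1) = t.val := Nat.div_add_mod _ _
  have hi : t.val / (m + 1) < m ! := by
    have : t.val < (m + 1) * m ! := by rw [← hMfac]; exact ha
    exact Nat.div_lt_of_lt_mul (by omega)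
  have hv1 : (t + 1).val = (t.val + 1) % ((m + 1)!) := by
    rw [ZMod.val_add, ZMod.val_one]
  by_cases hcase : t.val % (m + 1) < m
  · -- within a block
    have hmod1 : (t.val + 1) % (m + 1) = t.val % (m + 1) + 1 := by
      have h0 : t.val + 1 = (t.val % (m + 1) + 1) + (m + 1) * (t.val / (m + 1)) := by omega
      rw [h0, Nat.add_mul_mod_self_left, Nat.mod_eq_of_lt (by omega)]
    have hlt : t.val + 1 < (m + 1)! := by
      rcases eq_or_lt_of_le (show t.val + 1 ≤ (m + 1)! by omega) with h0 | h0
      · exfalso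
        have h1 : (t.val + 1) % (m + 1) = 0 := by rw [h0, hMfac]; exact Nat.mul_mod_right _ _
        omega
      · exact h0
    have hval : (t + 1).val = t.val + 1 := by rw [hv1, Nat.mod_eq_of_lt hlt]
    have hdiv1 : (t.val + 1) / (m + 1) = t.val / (m + 1) := by
      have h0 : t.val + 1 = (t.val % (m + 1) + 1) + (m + 1) * (t.val / (m + 1)) := by omega
      rw [h0, Nat.add_mul_div_left _ _ (by omega : 0 < m + 1),
        Nat.div_eq_of_lt (by omega), zero_add]
    by_cases hEv : Even (t.val / (m + 1))
    · refine ⟨m - 1 - t.val % (m + 1), by omega, ?_⟩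
      rw [hof, hof, ← sstep_eq_mk m (m - 1 - t.val % (m + 1)) (by omega)]
      simp only [hf]
      rw [hval, hdiv1, hmod1, if_pos hEv, if_pos hEv, delta_succ, mul_assoc]
    · refine ⟨t.val % (m + 1), by omega, ?_⟩
      rw [hof, hof, ← sstep_eq_mk m (t.val % (m + 1)) (by omega)]
      simp only [hf]
      rw [hval, hdiv1, hmod1, if_neg hEv, if_neg hEv]
      have hrw : delta m (m - t.val % (m + 1))
          = delta m (m - (t.val % (m + 1) + 1)) * sstep m (t.val % (m + 1)) := by
        have h1 : m - t.val % (m + 1) = (m - (t.val % (m + 1) + 1)) + 1 := by omega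
        have h2 : m - 1 - (m - (t.val % (m + 1) + 1)) = t.val % (m + 1) := by omega
        rw [h1, delta_succ, h2]
      have hss : sstep m (t.val % (m + 1)) * sstep m (t.val % (m + 1)) = 1 :=
        Equiv.swap_mul_self _ _
      rw [hrw, mul_assoc, mul_assoc, hss, mul_one]
  · -- block boundary
    have hdm : t.val % (m + 1) = m := by omega
    obtain ⟨x, hx, hstep⟩ := hV (((t.val / (m + 1) : ℕ) : ZMod (m !)))
    have key : (t + 1).val % (m + 1) = 0 ∧
        (((t + 1).val / (m + 1) : ℕ) : ZMod (m !)) = ((t.val / (m + 1) : ℕ) : ZMod (m !)) + 1 ∧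
        (Even ((t + 1).val / (m + 1)) ↔ ¬ Even (t.val / (m + 1))) := by
      rcases eq_or_lt_of_le (show t.val + 1 ≤ (m + 1)! by omega) with h0 | h0
      · -- wrap-around
        have hval : (t + 1).val = 0 := by rw [hv1, h0, Nat.mod_self]
        have hi1 : t.val / (m + 1) + 1 = m ! := by
          have hexp : (m + 1) * (t.val / (m + 1) + 1)
              = (m + 1) * (t.val / (m + 1)) + (m + 1) := by ring
          have h1 : (m + 1) * (t.val / (m + 1) + 1) = (m + 1) * m ! := by
            rw [← hMfac]; omega
          exact Nat.eq_of_mul_eq_mul_left (by omega) h1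
        have heven : Even (m !) := by
          obtain ⟨c, hc⟩ := Nat.dvd_factorial (show 0 < 2 by omega) hm
          exact ⟨c, by omega⟩
        have hodd : ¬ Even (t.val / (m + 1)) :=
          Nat.even_add_one.mp (hi1 ▸ heven)
        refine ⟨by rw [hval]; simp, ?_, ?_⟩
        · rw [hval]
          have : ((t.val / (m + 1) : ℕ) : ZMod (m !)) + 1 = ((t.val / (m + 1) + 1 : ℕ) : ZMod (m !)) := by
            push_cast; ring
          rw [this, hi1]
          simp [ZMod.natCast_self]
        · rw [hval]
          simpa using hodd
      · -- no wrap
        have hval : (t + 1).val = t.val + 1 := by rw [hv1, Nat.mod_eq_of_lt h0]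
        have hexp : (m + 1) * (t.val / (m + 1) + 1)
            = (m + 1) * (t.val / (m + 1)) + (m + 1) := by ring
        have h1 : t.val + 1 = 0 + (m + 1) * (t.val / (m + 1) + 1) := by omega
        have hdiv : (t.val + 1) / (m + 1) = t.val / (m + 1) + 1 := by
          rw [h1, Nat.add_mul_div_left _ _ (by omega : 0 < m + 1), Nat.zero_div, zero_add]
        have hmod : (t.val + 1) % (m + 1) = 0 := by
          rw [h1, Nat.add_mul_mod_self_left, Nat.zero_mod]
        refine ⟨by rw [hval, hmod], ?_, ?_⟩
        · rw [hval, hdiv]; push_cast; ring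
        · rw [hval, hdiv]; exact Nat.even_add_one
    obtain ⟨K1, K2, K3⟩ := key
    have hcs : ∀ (y : ℕ) (hy : y < m), (⟨y, hy⟩ : Fin m).castSucc = ((y : ℕ) : Fin (m + 1)) := by
      intro y hy
      apply Fin.ext
      rw [Fin.coe_castSucc, Fin.val_cast_of_lt (by omega)]
    by_cases hEv : Even (t.val / (m + 1))
    · -- m moves from bottom back... even: after block, delta m m on both sides
      have hnEv : ¬ Even ((t + 1).val / (m + 1)) := fun h => (K3.mp h) hEv
      refine ⟨x + 1, by omega, ?_⟩
      rw [hof, hof, ← sstep_eq_mk m (x + 1) (by omega)]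
      simp only [hf]
      rw [K2, if_neg hnEv, K1, Nat.sub_zero, hdm, if_pos hEv, hstep, permCast_mul, permCast_swap,
        hcs x (by omega), hcs (x + 1) (by omega)]
      have happ1 : delta m m (((x + 1 : ℕ)) : Fin (m + 1)) = ((x : ℕ) : Fin (m + 1)) :=
        delta_shift m m le_rfl (x + 1) (by omega) (by omega)
      have happ2 : delta m m (((x + 1 + 1 : ℕ)) : Fin (m + 1)) = (((x + 1 : ℕ)) : Fin (m + 1)) :=
        delta_shift m m le_rfl (x + 1 + 1) (by omega) (by omega)
      have hconj : Equiv.swap ((x : ℕ) : Fin (m + 1)) (((x + 1 : ℕ)) : Fin (m + 1))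
          = delta m m * sstep m (x + 1) * (delta m m)⁻¹ := by
        rw [← happ2, ← happ1]
        exact Equiv.swap_apply_apply _ _ _
      rw [mul_assoc, hconj]
      simp [mul_assoc]
    · have hnEv : Even ((t + 1).val / (m + 1)) := K3.mpr hEv
      refine ⟨x, by omega, ?_⟩
      rw [hof, hof, ← sstep_eq_mk m x (by omega)]
      simp only [hf]
      rw [K2, if_pos hnEv, K1, hdm, if_neg hEv, Nat.sub_self, delta_zero, mul_one, mul_one,
        hstep, permCast_mul, permCast_swap, hcs x (by omega), hcs (x + 1) (by omega)]
      rfl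

lemma sjt (m : ℕ) (hm : 2 ≤ m) : SJTProp m := by
  induction m, hm using Nat.le_induction with
  | base => exact sjt_two
  | succ m hm ih => exact sjt_step m hm ih

lemma sjt_left (m : ℕ) (hm : 2 ≤ m) :
    ∃ V : ZMod (m !) ≃ Perm (Fin m), ∀ t : ZMod (m !), ∃ (x : ℕ) (h : x + 1 < m),
      V (t + 1) = Equiv.swap ⟨x, Nat.lt_of_succ_lt h⟩ ⟨x + 1, h⟩ * V t := by
  obtain ⟨V, hV⟩ := sjt m hm
  refine ⟨V.trans (Equiv.inv (Perm (Fin m))), ?_⟩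
  intro t
  obtain ⟨x, hx, hs⟩ := hV t
  refine ⟨x, hx, ?_⟩
  show (V (t + 1))⁻¹ = _ * (V t)⁻¹
  rw [hs, mul_inv_rev, Equiv.swap_inv]

/-- the cyclically shifted interval `{z | z + ρ ∈ [0, m)}` in `Fin (N+1)` -/
def Sset {N : ℕ} (ρ : Fin (N + 1)) (m : ℕ) : Set (Fin (N + 1)) :=
  {z : Fin (N + 1) | (z + ρ).val < m}

lemma ascent {N m : ℕ} (hm1 : 1 ≤ m) (w : Fin (N + 1))
    (h1 : ¬ w.val < m) (h2 : (w + 1).val < m) : w.val = N := by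
  have hw : w.val < N + 1 := w.isLt
  by_contra hne
  have hlt : w.val + 1 < N + 1 := by omega
  have hv : (w + 1).val = w.val + 1 := by
    rw [Fin.val_add, Fin.val_one']
    rw [Nat.mod_eq_of_lt (show 1 < N + 1 by omega)]
    rw [Nat.mod_eq_of_lt hlt]
  omega

lemma Sset_mem {N : ℕ} (ρ : Fin (N + 1)) (m : ℕ) (z : Fin (N + 1)) :
    z ∈ Sset ρ m ↔ (z + ρ).val < m := Iff.rfl

lemma Sset_ne {N : ℕ} (ρ ρ' : Fin (N + 1)) (hne : ρ ≠ ρ') {m : ℕ} (hm1 : 1 ≤ m)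
    (hm2 : m ≤ N) : Sset ρ m ≠ Sset ρ' m := by
  intro h
  have hρlt : ρ.val < N + 1 := ρ.isLt
  set z₀ : Fin (N + 1) := ⟨N - ρ.val, by omega⟩ with hz₀
  have hz0r : (z₀ + ρ).val = N := by
    rw [Fin.val_add]
    show (N - ρ.val + ρ.val) % (N + 1) = N
    rw [Nat.sub_add_cancel (by omega), Nat.mod_eq_of_lt (by omega)]
  have hone : (1 : Fin (N + 1)).val = 1 := by
    rw [Fin.val_one', Nat.mod_eq_of_lt (by omega)]
  have hz1r : (z₀ + 1 + ρ).val = 0 := by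
    have he : z₀ + 1 + ρ = z₀ + ρ + 1 := by ring
    rw [he, Fin.val_add, hz0r, hone, Nat.mod_self]
  have h0 := Set.ext_iff.mp h z₀
  have h1 := Set.ext_iff.mp h (z₀ + 1)
  rw [Sset_mem, Sset_mem] at h0 h1
  have hn0 : ¬ (z₀ + ρ').val < m := by
    intro hc
    have := h0.mpr ?_
    · omega
    · exact hc
  have hy1 : (z₀ + ρ' + 1).val < m := by
    have he : z₀ + 1 + ρ' = z₀ + ρ' + 1 := by ring
    rw [← he]
    exact h1.mp (by rw [hz1r]; omega)
  have := ascent hm1 (z₀ + ρ') hn0 hy1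
  have heq : z₀ + ρ' = z₀ + ρ := by
    apply Fin.ext
    rw [this, hz0r]
  exact hne (add_left_cancel heq.symm)

lemma Sset_cross {N k : ℕ} (hk : 1 ≤ k) (hn : 2 * k + 1 ≤ N)
    (a : Fin (N + 1)) (ha1 : 1 ≤ a.val) (ha2 : a.val + 2 ≤ N + 1)
    (ρ ρ' : Fin (N + 1)) (hρ : N + 1 - k ≤ ρ.val) (hρ' : ρ'.val + 1 ≤ k)
    {m : ℕ} (hm1 : 1 ≤ m) (hm2 : m ≤ N) :
    Sset ρ m ≠ (⇑(Equiv.swap a (a + 1)))⁻¹' (Sset ρ' m) := by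
  intro h
  have hρlt : ρ.val < N + 1 := ρ.isLt
  have hρ'lt : ρ'.val < N + 1 := ρ'.isLt
  have halt : a.val < N + 1 := a.isLt
  have hone : (1 : Fin (N + 1)).val = 1 := by
    rw [Fin.val_one', Nat.mod_eq_of_lt (by omega)]
  have hb : (a + 1).val = a.val + 1 := by
    rw [Fin.val_add, hone, Nat.mod_eq_of_lt (by omega)]
  have H : ∀ z : Fin (N + 1), ((z + ρ).val < m ↔ ((Equiv.swap a (a + 1)) z + ρ').val < m) :=
    fun z => Set.ext_iff.mp h z
  -- points for the first interval
  set z₀ : Fin (N + 1) := ⟨N - ρ.val, by omega⟩ with hz₀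
  have hz0r : (z₀ + ρ).val = N := by
    rw [Fin.val_add]
    show (N - ρ.val + ρ.val) % (N + 1) = N
    rw [Nat.sub_add_cancel (by omega), Nat.mod_eq_of_lt (by omega)]
  have hz1r : (z₀ + 1 + ρ).val = 0 := by
    have he : z₀ + 1 + ρ = z₀ + ρ + 1 := by ring
    rw [he, Fin.val_add, hz0r, hone, Nat.mod_self]
  have hz1v : (z₀ + 1).val = N - ρ.val + 1 := by
    rw [Fin.val_add, hone]
    show (N - ρ.val + 1) % (N + 1) = N - ρ.val + 1
    rw [Nat.mod_eq_of_lt (by omega)]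
  -- points for the second interval
  set y₀ : Fin (N + 1) := ⟨N - ρ'.val, by omega⟩ with hy₀
  have hy0r : (y₀ + ρ').val = N := by
    rw [Fin.val_add]
    show (N - ρ'.val + ρ'.val) % (N + 1) = N
    rw [Nat.sub_add_cancel (by omega), Nat.mod_eq_of_lt (by omega)]
  have hy1r : (y₀ + 1 + ρ').val = 0 := by
    have he : y₀ + 1 + ρ' = y₀ + ρ' + 1 := by ring
    rw [he, Fin.val_add, hy0r, hone, Nat.mod_self]
  have hy1v : (y₀ + 1).val = 0 ∨ N + 2 - k ≤ (y₀ + 1).val := by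
    rw [Fin.val_add, hone]
    show ((N - ρ'.val + 1) % (N + 1) = 0) ∨ _
    rcases Nat.eq_zero_or_pos ρ'.val with h0 | h0
    · left; rw [h0, Nat.sub_zero, Nat.mod_self]
    · right
      show N + 2 - k ≤ (N - ρ'.val + 1) % (N + 1)
      rw [Nat.mod_eq_of_lt (by omega)]
      omega
  -- first claim : the swap must move z₀ or z₀+1
  have claim1 : z₀ = a ∨ z₀ = a + 1 ∨ z₀ + 1 = a ∨ z₀ + 1 = a + 1 := by
    by_contra hc
    push_neg at hc
    obtain ⟨hc1, hc2, hc3, hc4⟩ := hc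
    have hf0 : Equiv.swap a (a + 1) z₀ = z₀ := Equiv.swap_apply_of_ne_of_ne hc1 hc2
    have hf1 : Equiv.swap a (a + 1) (z₀ + 1) = z₀ + 1 := Equiv.swap_apply_of_ne_of_ne hc3 hc4
    have hn0 : ¬ (z₀ + ρ').val < m := by
      intro hcc
      have := (H z₀).mpr (by rw [hf0]; exact hcc)
      omega
    have hy1 : (z₀ + ρ' + 1).val < m := by
      have he : z₀ + 1 + ρ' = z₀ + ρ' + 1 := by ring
      rw [← he]
      have := (H (z₀ + 1)).mp (by rw [hz1r]; omega)
      rwa [hf1] at this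
    have hasc := ascent hm1 (z₀ + ρ') hn0 hy1
    have heq : z₀ + ρ' = z₀ + ρ := by
      apply Fin.ext; rw [hasc, hz0r]
    have : ρ' = ρ := add_left_cancel heq
    have := congrArg Fin.val this
    omega
  -- second claim : the swap must move y₀ or y₀+1
  have claim2 : y₀ = a ∨ y₀ = a + 1 ∨ y₀ + 1 = a ∨ y₀ + 1 = a + 1 := by
    by_contra hc
    push_neg at hc
    obtain ⟨hc1, hc2, hc3, hc4⟩ := hc
    have hf0 : Equiv.swap a (a + 1) y₀ = y₀ := Equiv.swap_apply_of_ne_of_ne hc1 hc2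
    have hf1 : Equiv.swap a (a + 1) (y₀ + 1) = y₀ + 1 := Equiv.swap_apply_of_ne_of_ne hc3 hc4
    have hn0 : ¬ (y₀ + ρ).val < m := by
      intro hcc
      have := (H y₀).mp hcc
      rw [hf0] at this
      omega
    have hy1 : (y₀ + ρ + 1).val < m := by
      have he : y₀ + 1 + ρ = y₀ + ρ + 1 := by ring
      rw [← he]
      exact (H (y₀ + 1)).mpr (by rw [hf1, hy1r]; omega)
    have hasc := ascent hm1 (y₀ + ρ) hn0 hy1
    have heq : y₀ + ρ = z₀ + ρ := by
      apply Fin.ext; rw [hasc, hz0r]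
    have : y₀ = z₀ := add_right_cancel heq
    have := congrArg Fin.val this
    simp only [hy₀, hz₀] at this
    omega
  -- extract numeric facts
  have hz0v : z₀.val = N - ρ.val := rfl
  have hy0v : y₀.val = N - ρ'.val := rfl
  have hak : a.val ≤ k := by
    rcases claim1 with h1 | h1 | h1 | h1 <;> have hv := congrArg Fin.val h1 <;>
      simp only [hz0v, hz1v, hb] at hv <;> omega
  rcases claim2 with h1 | h1 | h1 | h1 <;> have hv := congrArg Fin.val h1 <;>
    simp only [hy0v, hb, h1] at hv <;> rcases hy1v with h0 | h0 <;> omega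

lemma rotpow {N : ℕ} (r : ℕ) : ∀ z : Fin (N + 1),
    ((finRotate (N + 1)) ^ r) z = z + (r : Fin (N + 1)) := by
  induction r with
  | zero => intro z; simp
  | succ r ih =>
      intro z
      rw [pow_succ, Perm.mul_apply, finRotate_succ_apply, ih (z + 1)]
      push_cast
      ring

lemma rot_preimage {N : ℕ} (r m : ℕ) :
    (⇑((finRotate (N + 1)) ^ r))⁻¹' (firstK (N + 1) m) = Sset ((r : ℕ) : Fin (N + 1)) m := by
  ext z
  simp only [Set.mem_preimage, firstK, Sset, Set.mem_setOf_eq, rotpow _ z]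

/-- For every `k ≥ 1` there is an `N` such that for all `n ≥ N`, the Kneser graph
of the permutohedron contains the `k`-th power of a Hamiltonian cycle. -/
theorem kg_permutohedron_ham_power (k : ℕ) (hk : 1 ≤ k) :
    ∃ N : ℕ, ∀ n : ℕ, N ≤ n → ContainsHamPower (KGPerm n) k := by
  refine ⟨2 * k + 2, ?_⟩
  intro n hn
  obtain ⟨N, rfl⟩ : ∃ N, n = N + 1 := ⟨n - 1, by omega⟩
  have hN : 2 * k + 1 ≤ N := by omega
  haveI : NeZero ((N + 1)!) := ⟨(Nat.factorial_pos _).ne'⟩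
  haveI : NeZero (N !) := ⟨(Nat.factorial_pos _).ne'⟩
  obtain ⟨V, hV⟩ := sjt_left N (by omega)
  have hMfac : (N + 1)! = (N + 1) * N ! := Nat.factorial_succ N
  have hcard : Nat.card (Perm (Fin (N + 1))) = (N + 1)! := by
    rw [Nat.card_eq_fintype_card, Fintype.card_perm, Fintype.card_fin]
  set f : ZMod ((N + 1)!) → Perm (Fin (N + 1)) := fun t =>
    (finRotate (N + 1)) ^ (t.val % (N + 1)) *
      permSucc (V (((t.val / (N + 1) : ℕ) : ZMod (N !)))) with hf
  have hinj : Function.Injective f := by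
    intro t t' heq
    have happ := congrArg (fun π : Perm (Fin (N + 1)) => π 0) heq
    simp only [hf, Perm.mul_apply, permSucc_zero, rotpow, zero_add] at happ
    have hr : t.val % (N + 1) = t'.val % (N + 1) := by
      have := congrArg Fin.val happ
      rwa [Fin.val_cast_of_lt (Nat.mod_lt _ (by omega)),
        Fin.val_cast_of_lt (Nat.mod_lt _ (by omega))] at this
    simp only [hf] at heq
    rw [hr] at heq
    have hcancel := mul_left_cancel heq
    have hVeq := V.injective (permSucc_inj hcancel)
    have hq : t.val / (N + 1) = t'.val / (N + 1) := by
      have h1 : t.val / (N + 1) < N ! :=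
        Nat.div_lt_of_lt_mul (by rw [← hMfac]; exact ZMod.val_lt t)
      have h2 : t'.val / (N + 1) < N ! :=
        Nat.div_lt_of_lt_mul (by rw [← hMfac]; exact ZMod.val_lt t')
      have := congrArg ZMod.val hVeq
      rwa [ZMod.val_cast_of_lt h1, ZMod.val_cast_of_lt h2] at this
    apply ZMod.val_injective
    have d1 := Nat.div_add_mod t.val (N + 1)
    have d2 := Nat.div_add_mod t'.val (N + 1)
    have d3 : (N + 1) * (t.val / (N + 1)) = (N + 1) * (t'.val / (N + 1)) := by rw [hq]
    omega
  have hbij : Function.Bijective f := by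
    rw [Fintype.bijective_iff_injective_and_card]
    exact ⟨hinj, by rw [ZMod.card, Fintype.card_perm, Fintype.card_fin]⟩
  unfold ContainsHamPower
  rw [hcard]
  refine ⟨Equiv.ofBijective f hbij, ?_⟩
  intro i j hj1 hjk
  have hof : ∀ s, Equiv.ofBijective f hbij s = f s := fun _ => rfl
  have hfacge : N + 1 ≤ (N + 1)! := Nat.self_le_factorial _
  have hjM : ((j : ℕ) : ZMod ((N + 1)!)).val = j := ZMod.val_cast_of_lt (by omega)
  have hv : (i + (j : ZMod ((N + 1)!))).val = (i.val + j) % ((N + 1)!) := by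
    rw [ZMod.val_add, hjM]
  have ha : i.val < (N + 1)! := ZMod.val_lt i
  have hdm : (N + 1) * (i.val / (N + 1)) + i.val % (N + 1) = i.val := Nat.div_add_mod _ _
  have hdlt : i.val % (N + 1) < N + 1 := Nat.mod_lt _ (by omega)
  have hilt : i.val / (N + 1) < N ! :=
    Nat.div_lt_of_lt_mul (by rw [← hMfac]; exact ha)
  have hmono : ∀ u v : ℕ, u ≤ v → (N + 1) * u ≤ (N + 1) * v :=
    fun u v h => Nat.mul_le_mul_left _ h
  have hfacsub : (N + 1) * (Nat.factorial N - 1) + (N + 1) = (N + 1) * N ! := by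
    have h1 : Nat.factorial N - 1 + 1 = N ! := Nat.succ_pred_eq_of_pos (Nat.factorial_pos N)
    calc (N + 1) * (Nat.factorial N - 1) + (N + 1) = (N + 1) * (Nat.factorial N - 1 + 1) := by ring
    _ = (N + 1) * N ! := by rw [h1]
  constructor
  · -- the two permutations are distinct
    intro hh
    have h0 := hinj hh
    have h1 : ((j : ℕ) : ZMod ((N + 1)!)) = 0 := by
      have := left_eq_add.mp h0
      exact this
    have := congrArg ZMod.val h1
    rw [hjM, ZMod.val_zero] at this
    omega
  · -- preimage condition
    intro m hm1 hm2
    have hm2' : m ≤ N := by omega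
    by_cases hcs : i.val % (N + 1) + j < N + 1
    · -- same block : both are rotations of the same permutation
      have hq1 : i.val / (N + 1) ≤ Nat.factorial N - 1 := by omega
      have hlt : i.val + j < (N + 1)! := by
        have := hmono _ _ hq1
        omega
      have hb : (i + (j : ZMod ((N + 1)!))).val = i.val + j := by
        rw [hv, Nat.mod_eq_of_lt hlt]
      have hsplit : i.val + j = (i.val % (N + 1) + j) + (N + 1) * (i.val / (N + 1)) := by omega
      have hbd : (i.val + j) / (N + 1) = i.val / (N + 1) := by
        rw [hsplit, Nat.add_mul_div_left _ _ (by omega : 0 < N + 1),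
          Nat.div_eq_of_lt hcs, zero_add]
      have hbm : (i.val + j) % (N + 1) = i.val % (N + 1) + j := by
        rw [hsplit, Nat.add_mul_mod_self_left, Nat.mod_eq_of_lt hcs]
      rw [hof, hof]
      simp only [hf, hb, hbd, hbm]
      rw [Perm.coe_mul, Perm.coe_mul, Set.preimage_comp, Set.preimage_comp,
        rot_preimage, rot_preimage]
      intro hSS
      have himg := congrArg (Set.image ⇑(permSucc (V (((i.val / (N + 1) : ℕ) : ZMod (N !)))))) hSS
      rw [Set.image_preimage_eq _ (permSucc _).surjective,
        Set.image_preimage_eq _ (permSucc _).surjective] at himg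
      refine Sset_ne _ _ ?_ hm1 hm2' himg
      intro hcast
      have := congrArg Fin.val hcast
      rw [Fin.val_cast_of_lt hdlt, Fin.val_cast_of_lt (by omega)] at this
      omega
    · -- block boundary
      have hrge : N + 1 - k ≤ i.val % (N + 1) := by omega
      have hkey : (i + (j : ZMod ((N + 1)!))).val % (N + 1) = i.val % (N + 1) + j - (N + 1) ∧
          (((i + (j : ZMod ((N + 1)!))).val / (N + 1) : ℕ) : ZMod (N !))
            = ((i.val / (N + 1) : ℕ) : ZMod (N !)) + 1 := by
        by_cases hlt : i.val + j < (N + 1)!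
        · have hb : (i + (j : ZMod ((N + 1)!))).val = i.val + j := by
            rw [hv, Nat.mod_eq_of_lt hlt]
          have hsplit : i.val + j
              = (i.val % (N + 1) + j - (N + 1)) + (N + 1) * (i.val / (N + 1) + 1) := by
            have : (N + 1) * (i.val / (N + 1) + 1) = (N + 1) * (i.val / (N + 1)) + (N + 1) := by
              ring
            omega
          constructor
          · rw [hb, hsplit, Nat.add_mul_mod_self_left, Nat.mod_eq_of_lt (by omega)]
          · rw [hb, hsplit, Nat.add_mul_div_left _ _ (by omega : 0 < N + 1),
              Nat.div_eq_of_lt (by omega), zero_add]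
            push_cast
            ring
        · -- wrap-around of the counter
          have hlt2 : i.val + j - (N + 1)! < (N + 1)! := by omega
          have hb : (i + (j : ZMod ((N + 1)!))).val = i.val + j - (N + 1)! := by
            rw [hv, Nat.mod_eq_sub_mod (by omega), Nat.mod_eq_of_lt hlt2]
          have hqtop : i.val / (N + 1) + 1 = N ! := by
            by_contra hq
            have hq2 : i.val / (N + 1) + 1 ≤ Nat.factorial N - 1 := by omega
            have := hmono _ _ hq2
            have hexp : (N + 1) * (i.val / (N + 1) + 1)
                = (N + 1) * (i.val / (N + 1)) + (N + 1) := by ring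
            omega
          have hexp : (N + 1) * (i.val / (N + 1) + 1)
              = (N + 1) * (i.val / (N + 1)) + (N + 1) := by ring
          have hM2 : (N + 1) * (i.val / (N + 1)) + (N + 1) = (N + 1)! := by
            have h2 : (N + 1) * (i.val / (N + 1) + 1) = (N + 1)! := by
              rw [hqtop, hMfac]
            omega
          have hbval : (i + (j : ZMod ((N + 1)!))).val = i.val % (N + 1) + j - (N + 1) := by
            omega
          constructor
          · rw [hbval, Nat.mod_eq_of_lt (by omega)]
          · rw [hbval, Nat.div_eq_of_lt (by omega)]
            have h1 : ((i.val / (N + 1) : ℕ) : ZMod (N !)) + 1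
                = ((i.val / (N + 1) + 1 : ℕ) : ZMod (N !)) := by push_cast; ring
            rw [h1, hqtop]
            simp
      obtain ⟨hbm, hbd⟩ := hkey
      obtain ⟨x, hx, hstep⟩ := hV (((i.val / (N + 1) : ℕ) : ZMod (N !)))
      rw [hof, hof]
      simp only [hf, hbm, hbd]
      rw [hstep, permSucc_mul, permSucc_swap]
      set aF : Fin (N + 1) := (⟨x, Nat.lt_of_succ_lt hx⟩ : Fin N).succ with haF
      have haFv : aF.val = x + 1 := rfl
      have hsw : (⟨x + 1, hx⟩ : Fin N).succ = aF + 1 := by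
        apply Fin.ext
        rw [Fin.val_add, haFv]
        show x + 1 + 1 = (x + 1 + (1 : Fin (N + 1)).val) % (N + 1)
        rw [Fin.val_one', Nat.mod_eq_of_lt (show (1 : ℕ) < N + 1 by omega),
          Nat.mod_eq_of_lt (show x + 1 + 1 < N + 1 by omega)]
      rw [hsw]
      rw [Perm.coe_mul, Perm.coe_mul, Perm.coe_mul, Set.preimage_comp, Set.preimage_comp,
        Set.preimage_comp, rot_preimage, rot_preimage]
      intro hSS
      have himg := congrArg (Set.image ⇑(permSucc (V (((i.val / (N + 1) : ℕ) : ZMod (N !)))))) hSS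
      rw [Set.image_preimage_eq _ (permSucc _).surjective,
        Set.image_preimage_eq _ (permSucc _).surjective] at himg
      refine Sset_cross hk hN aF (by rw [haFv]; omega) (by rw [haFv]; omega)
        _ _ ?_ ?_ hm1 hm2' himg
      · rw [Fin.val_cast_of_lt hdlt]
        exact hrge
      · rw [Fin.val_cast_of_lt (show i.val % (N + 1) + j - (N + 1) < N + 1 by omega)]
        omega
end

section
/- Let n ≥ 4 and let O be a rotation orbit of triangulations of the n-gon. Then O has size exactly 2 if and only if n ∈ {4,6} and every triangulation in O consists only of ears, i.e., every diagonal of every triangulation in O has the form {i, i+2} (mod n). -/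
/-- `x` lies strictly between `a` and `b` in the cyclic (clockwise) order on `ZMod n`. -/
def NgonBtw (n : ℕ) (a x b : ZMod n) : Prop :=
  0 < (x - a).val ∧ (x - a).val < (b - a).val

/-- Two unordered pairs of vertices of the `n`-gon cross: they have representations
`{a,b}` and `{c,d}` with `c` strictly inside one open arc determined by `a, b`
and `d` strictly inside the other. -/
def NgonCross (n : ℕ) (e f : Sym2 (ZMod n)) : Prop :=
  ∃ a b c d : ZMod n, e = s(a, b) ∧ f = s(c, d) ∧
    NgonBtw n a c b ∧ NgonBtw n b d a

/-- A diagonal of the convex `n`-gon: an unordered pair `{i,j}` with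
`i - j` not congruent to `0`, `1` or `-1` modulo `n`. -/
def IsDiagonal (n : ℕ) (e : Sym2 (ZMod n)) : Prop :=
  ∃ i j : ZMod n, e = s(i, j) ∧ i - j ≠ 0 ∧ i - j ≠ 1 ∧ i - j ≠ -1

/-- A triangulation of the convex `n`-gon: a set of `n - 3` pairwise
noncrossing diagonals. -/
def IsTriangulation (n : ℕ) (T : Finset (Sym2 (ZMod n))) : Prop :=
  T.card = n - 3 ∧ (∀ e ∈ T, IsDiagonal n e) ∧
    ∀ e ∈ T, ∀ f ∈ T, ¬ NgonCross n e f

/-- Clockwise rotation of a diagonal: `{i,j} ↦ {i+1, j+1}`. -/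
def rotDiag (n : ℕ) (e : Sym2 (ZMod n)) : Sym2 (ZMod n) :=
  e.map (· + 1)

/-- Inverse rotation of a diagonal: `{i,j} ↦ {i-1, j-1}`. -/
def rotInvDiag (n : ℕ) (e : Sym2 (ZMod n)) : Sym2 (ZMod n) :=
  e.map (· - 1)

/-- Clockwise rotation of a triangulation. -/
def rotTri (n : ℕ) (T : Finset (Sym2 (ZMod n))) : Finset (Sym2 (ZMod n)) :=
  T.image (rotDiag n)

/-- Inverse rotation of a triangulation. -/
def rotInvTri (n : ℕ) (T : Finset (Sym2 (ZMod n))) : Finset (Sym2 (ZMod n)) :=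
  T.image (rotInvDiag n)

/-- The rotation orbit of a triangulation. -/
def rotOrbit (n : ℕ) (T : Finset (Sym2 (ZMod n))) : Set (Finset (Sym2 (ZMod n))) :=
  {S | ∃ k : ℕ, S = (rotTri n)^[k] T}

/-- The type of triangulations of the convex `n`-gon. -/
abbrev Triangulation (n : ℕ) : Type := {T : Finset (Sym2 (ZMod n)) // IsTriangulation n T}

/-- The Kneser graph of triangulations of the convex `n`-gon: two triangulations
are adjacent iff they are distinct and share no diagonal. -/
def KGTri (n : ℕ) : SimpleGraph (Triangulation n) where
  Adj T T' := T ≠ T' ∧ Disjoint T.1 T'.1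
  symm := ⟨fun T T' h => ⟨h.1.symm, h.2.symm⟩⟩
  loopless := ⟨fun T h => h.1 rfl⟩

noncomputable instance (n : ℕ) [NeZero n] : Fintype (Triangulation n) :=
  Fintype.ofFinite _

/-- An ear: a diagonal of the form `{i, i+2}` (mod `n`). -/
def IsEar (n : ℕ) (e : Sym2 (ZMod n)) : Prop :=
  ∃ i : ZMod n, e = s(i, i + 2)

lemma rotDiag_pair (n : ℕ) (a b : ZMod n) : rotDiag n s(a, b) = s(a + 1, b + 1) :=
  Sym2.map_pair_eq _ _ _

lemma rotInv_rot (n : ℕ) (T : Finset (Sym2 (ZMod n))) : rotInvTri n (rotTri n T) = T := by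
  unfold rotInvTri rotTri
  rw [Finset.image_image]
  have h : rotInvDiag n ∘ rotDiag n = id := by
    funext e
    induction e using Sym2.ind with
    | _ a b => simp [rotInvDiag, rotDiag, Sym2.map_pair_eq]
  rw [h, Finset.image_id]

lemma rotTri_injective (n : ℕ) : Function.Injective (rotTri n) :=
  Function.LeftInverse.injective (rotInv_rot n)

lemma rotTri_iterate (n : ℕ) (T : Finset (Sym2 (ZMod n))) (k : ℕ) :
    (rotTri n)^[k] T = T.image (Sym2.map (· + (k : ZMod n))) := by
  induction k with
  | zero =>
    have h : (Sym2.map (· + ((0 : ℕ) : ZMod n))) = id := by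
      funext e
      induction e using Sym2.ind with
      | _ a b => simp [Sym2.map_pair_eq]
    simp [h]
  | succ k ih =>
    rw [Function.iterate_succ_apply', ih]
    unfold rotTri
    rw [Finset.image_image]
    congr 1
    funext e
    induction e using Sym2.ind with
    | _ a b =>
      simp only [Function.comp_apply, Sym2.map_pair_eq, rotDiag]
      rw [Nat.cast_add, Nat.cast_one, ← add_assoc, ← add_assoc]

lemma rotTri_iterate_self (n : ℕ) [NeZero n] (T : Finset (Sym2 (ZMod n))) :
    (rotTri n)^[n] T = T := by
  rw [rotTri_iterate]
  have h : (Sym2.map (· + ((n : ℕ) : ZMod n))) = id := by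
    funext e
    induction e using Sym2.ind with
    | _ a b => simp [Sym2.map_pair_eq, ZMod.natCast_self]
  rw [h, Finset.image_id]

lemma rotOrbit_finite (n : ℕ) [NeZero n] (T : Finset (Sym2 (ZMod n))) :
    (rotOrbit n T).Finite := by
  apply Set.Finite.subset ((Finset.range n).image (fun k => (rotTri n)^[k] T)).finite_toSet
  rintro S ⟨k, rfl⟩
  simp only [Finset.coe_image, Set.mem_image, Finset.mem_coe, Finset.mem_range]
  refine ⟨k % n, Nat.mod_lt _ (Nat.pos_of_ne_zero (NeZero.ne n)), ?_⟩
  conv_rhs => rw [← Nat.mod_add_div k n]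
  rw [Function.iterate_add_apply]
  congr 1
  rw [Function.iterate_mul]
  exact (Function.iterate_fixed (rotTri_iterate_self n T) _).symm

lemma iterate_two_periodic {α : Type*} (f : α → α) (T : α) (h2 : f (f T) = T) (k : ℕ) :
    f^[k] T = T ∨ f^[k] T = f T := by
  have hf2 : f^[2] T = T := by
    rw [show (2 : ℕ) = 1 + 1 by rfl, Function.iterate_add_apply]
    simpa using h2
  have key : ∀ q, f^[2 * q] T = T := by
    intro q
    rw [Function.iterate_mul]
    exact Function.iterate_fixed hf2 q
  have hk : f^[k] T = f^[k % 2] T := by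
    conv_lhs => rw [← Nat.mod_add_div k 2, Function.iterate_add_apply, key]
  rcases Nat.mod_two_eq_zero_or_one k with h | h <;> rw [hk, h] <;> simp

lemma orbit_eq_pair (n : ℕ) (T : Finset (Sym2 (ZMod n)))
    (h2 : rotTri n (rotTri n T) = T) :
    rotOrbit n T = {T, rotTri n T} := by
  ext S
  simp only [rotOrbit, Set.mem_setOf_eq, Set.mem_insert_iff, Set.mem_singleton_iff]
  constructor
  · rintro ⟨k, rfl⟩
    exact iterate_two_periodic _ _ h2 k
  · rintro (rfl | rfl)
    exacts [⟨0, rfl⟩, ⟨1, rfl⟩]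

lemma ncard_two_imp (n : ℕ) [NeZero n] (T : Finset (Sym2 (ZMod n)))
    (h : (rotOrbit n T).ncard = 2) :
    rotTri n T ≠ T ∧ rotTri n (rotTri n T) = T := by
  have hfin := rotOrbit_finite n T
  have h1 : rotTri n T ≠ T := by
    intro h1
    have horb : rotOrbit n T = {T} := by
      ext S
      constructor
      · rintro ⟨k, rfl⟩
        simp [Function.iterate_fixed h1 k]
      · rintro rfl
        exact ⟨0, rfl⟩
    rw [horb] at h
    simp at h
  refine ⟨h1, ?_⟩
  by_contra h2
  have hm0 : T ∈ rotOrbit n T := ⟨0, rfl⟩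
  have hm1 : rotTri n T ∈ rotOrbit n T := ⟨1, rfl⟩
  have hm2 : rotTri n (rotTri n T) ∈ rotOrbit n T :=
    ⟨2, by rw [show (2:ℕ) = 1 + 1 by rfl, Function.iterate_add_apply]; simp⟩
  have hne12 : rotTri n (rotTri n T) ≠ rotTri n T := fun hh => h1 (rotTri_injective n hh)
  have hsub : ({T, rotTri n T, rotTri n (rotTri n T)} : Set _) ⊆ rotOrbit n T := by
    intro S hS
    rcases hS with rfl | rfl | rfl
    exacts [hm0, hm1, hm2]
  have hc3 : ({T, rotTri n T, rotTri n (rotTri n T)} : Set _).ncard = 3 := by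
    rw [Set.ncard_insert_of_notMem
        (by simp only [Set.mem_insert_iff, Set.mem_singleton_iff]
            push_neg
            exact ⟨Ne.symm h1, fun hh => h2 hh.symm⟩),
      Set.ncard_pair (Ne.symm hne12)]
  have := Set.ncard_le_ncard hsub hfin
  omega

lemma val_two {n : ℕ} (hn : 4 ≤ n) : (2 : ZMod n).val = 2 := by
  have h : ((2 : ℕ) : ZMod n).val = 2 := ZMod.val_cast_of_lt (by omega)
  simpa using h

lemma myTwoNeZero {n : ℕ} (hn : 4 ≤ n) : (2 : ZMod n) ≠ 0 := by
  have : NeZero n := ⟨by omega⟩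
  intro h
  have := val_two hn
  rw [h, ZMod.val_zero] at this
  omega

lemma neg_two_val {n : ℕ} (hn : 4 ≤ n) : (-2 : ZMod n).val = n - 2 := by
  have : NeZero n := ⟨by omega⟩
  rw [ZMod.neg_val, if_neg (myTwoNeZero hn), val_two hn]

lemma ear_cross_adj {n : ℕ} (hn : 4 ≤ n) (i : ZMod n) :
    NgonCross n s(i, i + 2) s(i + 1, i + 1 + 2) := by
  have : NeZero n := ⟨by omega⟩
  have : Fact (1 < n) := ⟨by omega⟩
  refine ⟨i, i + 2, i + 1, i + 1 + 2, rfl, rfl, ⟨?_, ?_⟩, ⟨?_, ?_⟩⟩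
  · rw [add_sub_cancel_left, ZMod.val_one]
    omega
  · rw [add_sub_cancel_left, add_sub_cancel_left, ZMod.val_one, val_two hn]
    omega
  · rw [show i + 1 + 2 - (i + 2) = 1 by ring, ZMod.val_one]
    omega
  · rw [show i + 1 + 2 - (i + 2) = 1 by ring, show i - (i + 2) = -2 by ring,
      ZMod.val_one, neg_two_val hn]
    omega

lemma mem_of_double_rot {n : ℕ} {T : Finset (Sym2 (ZMod n))}
    (h2 : rotTri n (rotTri n T) = T) {e : Sym2 (ZMod n)} (he : e ∈ T) :
    rotDiag n (rotDiag n e) ∈ T := by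
  conv => rw [← h2]
  exact Finset.mem_image_of_mem _ (Finset.mem_image_of_mem _ he)

lemma ears_of_period_two {n : ℕ} (hn : 4 ≤ n) {T : Finset (Sym2 (ZMod n))}
    (hT : IsTriangulation n T) (h2 : rotTri n (rotTri n T) = T) :
    ∀ e ∈ T, IsEar n e := by
  have : NeZero n := ⟨by omega⟩
  intro e he
  obtain ⟨i, j, rfl, hd0, hd1, hdm1⟩ := hT.2.1 _ he
  set d := j - i with hd
  have hdne : d ≠ 0 := by
    rw [hd, sub_ne_zero]
    intro h
    exact hd0 (by rw [h, sub_self])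
  have hdne1 : d ≠ 1 := by
    rw [hd]
    intro h
    exact hdm1 (by rw [show i - j = -(j - i) by ring, h])
  have hdnem1 : d ≠ -1 := by
    rw [hd]
    intro h
    exact hd1 (by rw [show i - j = -(j - i) by ring, h]; ring)
  set k := d.val with hk
  have hcast : ((k : ℕ) : ZMod n) = d := ZMod.natCast_zmod_val d
  have hk0 : k ≠ 0 := fun h => hdne ((ZMod.val_eq_zero d).mp h)
  have hk1 : k ≠ 1 := by
    intro h
    apply hdne1
    rw [← hcast, h, Nat.cast_one]
  have hklt : k < n := ZMod.val_lt d
  have hknm1 : k ≠ n - 1 := by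
    intro h
    apply hdnem1
    rw [← hcast, h, Nat.cast_sub (by omega), ZMod.natCast_self, Nat.cast_one, zero_sub]
  have hji : j = i + d := by rw [hd]; ring
  rcases (show k = 2 ∨ k = n - 2 ∨ (3 ≤ k ∧ k ≤ n - 3) by omega) with h | h | ⟨h3, h3'⟩
  · -- k = 2 : ear at i
    refine ⟨i, ?_⟩
    rw [hji, ← hcast, h]
    norm_num
  · -- k = n - 2 : ear at j
    refine ⟨j, ?_⟩
    have : i = j + 2 := by
      have hneg : (-d).val = n - k := by
        rw [ZMod.neg_val, if_neg hdne, hk]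
      rw [h] at hneg
      have h2' : (-d) = ((n - (n - 2) : ℕ) : ZMod n) := by
        rw [← hneg, ZMod.natCast_zmod_val]
      have : (-d) = 2 := by
        rw [h2', show n - (n - 2) = 2 by omega]
        norm_num
      have : i - j = 2 := by rw [show i - j = -d by rw [hd]; ring, this]
      rw [← this]; ring
    rw [this, Sym2.eq_swap]
  · -- crossing contradiction
    exfalso
    have hmem2 : rotDiag n (rotDiag n s(i, j)) ∈ T := mem_of_double_rot h2 he
    rw [rotDiag_pair, rotDiag_pair, show i + 1 + 1 = i + 2 by ring,
      show j + 1 + 1 = j + 2 by ring] at hmem2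
    apply hT.2.2 _ he _ hmem2
    refine ⟨i, j, i + 2, j + 2, rfl, rfl, ⟨?_, ?_⟩, ⟨?_, ?_⟩⟩
    · rw [add_sub_cancel_left, val_two hn]; omega
    · rw [add_sub_cancel_left, val_two hn, ← hd, ← hk]; omega
    · rw [add_sub_cancel_left, val_two hn]; omega
    · rw [add_sub_cancel_left, val_two hn, show i - j = -d by rw [hd]; ring,
        ZMod.neg_val, if_neg hdne, ← hk]
      omega

lemma eq_six {n : ℕ} (hn5 : 5 ≤ n) {T : Finset (Sym2 (ZMod n))}
    (hT : IsTriangulation n T) (h2 : rotTri n (rotTri n T) = T) : n = 6 := by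
  have : NeZero n := ⟨by omega⟩
  have hear := ears_of_period_two (by omega) hT h2
  set J := Finset.univ.filter (fun i : ZMod n => s(i, i + 2) ∈ T) with hJdef
  have hmemJ : ∀ i : ZMod n, i ∈ J ↔ s(i, i + 2) ∈ T := by
    intro i
    simp [hJdef]
  have hinj : Set.InjOn (fun i : ZMod n => s(i, i + 2)) J := by
    intro a _ b _ hab
    rcases Sym2.eq_iff.mp hab with ⟨h, _⟩ | ⟨h1', h2'⟩
    · exact h
    · exfalso
      have h4 : (4 : ZMod n) = 0 := by
        have : a = a + (2 + 2) := by
          conv_lhs => rw [h1', ← h2']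
          ring
        have := (left_eq_add).mp this
        rw [← this]; norm_num
      have : n ∣ 4 := by
        have : ((4 : ℕ) : ZMod n) = 0 := by exact_mod_cast h4
        exact (ZMod.natCast_eq_zero_iff 4 n).mp this
      have := Nat.le_of_dvd (by norm_num) this
      omega
  have hTJ : T = J.image (fun i => s(i, i + 2)) := by
    ext e
    simp only [Finset.mem_image]
    constructor
    · intro he
      obtain ⟨i, rfl⟩ := hear e he
      exact ⟨i, (hmemJ i).mpr he, rfl⟩
    · rintro ⟨i, hi, rfl⟩
      exact (hmemJ i).mp hi
  have hcard : J.card = n - 3 := by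
    rw [← hT.1, hTJ, Finset.card_image_of_injOn hinj]
  have hstep : ∀ i ∈ J, i + 2 ∈ J := by
    intro i hi
    rw [hmemJ] at hi ⊢
    have := mem_of_double_rot h2 hi
    rwa [rotDiag_pair, rotDiag_pair, show i + 1 + 1 = i + 2 by ring,
      show i + 2 + 1 + 1 = i + 2 + 2 by ring] at this
  have hclos : ∀ i ∈ J, ∀ k : ℕ, i + ((2 * k : ℕ) : ZMod n) ∈ J := by
    intro i hi k
    induction k with
    | zero => simpa using hi
    | succ k ih =>
      have := hstep _ ih
      rwa [show i + ((2 * k : ℕ) : ZMod n) + 2 = i + ((2 * (k + 1) : ℕ) : ZMod n) by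
        push_cast; ring] at this
  have hadj : ∀ i : ZMod n, i ∈ J → i + 1 ∈ J → False := by
    intro i hi hi1
    exact hT.2.2 _ ((hmemJ i).mp hi) _ ((hmemJ (i + 1)).mp hi1) (ear_cross_adj (by omega) i)
  obtain ⟨i, hi⟩ : J.Nonempty := Finset.card_pos.mp (by omega)
  rcases Nat.even_or_odd n with ⟨m, hm⟩ | ⟨t, ht⟩
  · -- n even
    have hJP : J ⊆ (Finset.range m).image (fun k => i + ((2 * k : ℕ) : ZMod n)) := by
      intro x hx
      have hxv : x = i + (((x - i).val : ℕ) : ZMod n) := by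
        rw [ZMod.natCast_zmod_val]; ring
      rcases Nat.even_or_odd (x - i).val with ⟨w, hw⟩ | ⟨w, hw⟩
      · refine Finset.mem_image.mpr ⟨w, Finset.mem_range.mpr ?_, ?_⟩
        · have := ZMod.val_lt (x - i)
          omega
        · rw [hxv, hw, show w + w = 2 * w by ring]
      · exfalso
        apply hadj (i + ((2 * w : ℕ) : ZMod n)) (hclos i hi w)
        have hx1 : i + ((2 * w : ℕ) : ZMod n) + 1 = x := by
          rw [hxv, show (x - i).val = 2 * w + 1 by omega]
          push_cast
          ring
        rwa [hx1]
    have hle := Finset.card_le_card hJP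
    have hPle : ((Finset.range m).image (fun k => i + ((2 * k : ℕ) : ZMod n))).card ≤ m :=
      Finset.card_image_le.trans (by simp)
    omega
  · -- n odd : contradiction
    exfalso
    apply hadj i hi
    have := hclos i hi (t + 1)
    rwa [show ((2 * (t + 1) : ℕ) : ZMod n) = 1 by
      rw [show 2 * (t + 1) = n + 1 by omega]
      push_cast [ZMod.natCast_self]
      ring] at this

lemma four_case {T : Finset (Sym2 (ZMod 4))} (hT : IsTriangulation 4 T) :
    rotTri 4 T ≠ T ∧ rotTri 4 (rotTri 4 T) = T := by
  obtain ⟨e, rfl⟩ := Finset.card_eq_one.mp (by have := hT.1; simpa using this)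
  obtain ⟨i, j, rfl, h0, h1, hm1⟩ := hT.2.1 e (Finset.mem_singleton_self e)
  have hij : i = j + 2 := by
    have : i - j = 2 := by
      revert h0 h1 hm1
      generalize i - j = x
      revert x
      decide
    rw [← this]; ring
  subst hij
  rw [show s(j + 2, j) = s(j, j + 2) from Sym2.eq_swap]
  constructor
  · intro h
    rw [rotTri, Finset.image_singleton, rotDiag_pair] at h
    have h' := Finset.singleton_injective h
    rcases Sym2.eq_iff.mp h' with ⟨ha, _⟩ | ⟨ha, _⟩
    · exact absurd (show (1 : ZMod 4) = 0 by linear_combination ha) (by decide)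
    · exact absurd (show (1 : ZMod 4) = 2 by linear_combination ha) (by decide)
  · simp only [rotTri, Finset.image_singleton, rotDiag_pair]
    congr 1
    have h40 : (4 : ZMod 4) = 0 := by decide
    rw [show j + 1 + 1 = j + 2 by ring, show j + 2 + 1 + 1 = j by linear_combination h40]
    exact Sym2.eq_swap

lemma ear_repr {n : ℕ} (hn5 : 5 ≤ n) {T : Finset (Sym2 (ZMod n))}
    (hT : IsTriangulation n T) (hear : ∀ e ∈ T, IsEar n e) :
    ∃ J : Finset (ZMod n), T = J.image (fun i => s(i, i + 2)) ∧ J.card = n - 3 ∧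
      ∀ i : ZMod n, i ∈ J → i + 1 ∈ J → False := by
  have : NeZero n := ⟨by omega⟩
  set J := Finset.univ.filter (fun i : ZMod n => s(i, i + 2) ∈ T) with hJdef
  have hmemJ : ∀ i : ZMod n, i ∈ J ↔ s(i, i + 2) ∈ T := by
    intro i; simp [hJdef]
  have hinj : Set.InjOn (fun i : ZMod n => s(i, i + 2)) J := by
    intro a _ b _ hab
    rcases Sym2.eq_iff.mp hab with ⟨h, _⟩ | ⟨h1', h2'⟩
    · exact h
    · exfalso
      have h4 : (4 : ZMod n) = 0 := by
        have : a = a + (2 + 2) := by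
          conv_lhs => rw [h1', ← h2']
          ring
        have := (left_eq_add).mp this
        rw [← this]; norm_num
      have : n ∣ 4 := by
        have : ((4 : ℕ) : ZMod n) = 0 := by exact_mod_cast h4
        exact (ZMod.natCast_eq_zero_iff 4 n).mp this
      have := Nat.le_of_dvd (by norm_num) this
      omega
  have hTJ : T = J.image (fun i => s(i, i + 2)) := by
    ext e
    simp only [Finset.mem_image]
    constructor
    · intro he
      obtain ⟨i, rfl⟩ := hear e he
      exact ⟨i, (hmemJ i).mpr he, rfl⟩
    · rintro ⟨i, hi, rfl⟩
      exact (hmemJ i).mp hi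
  refine ⟨J, hTJ, ?_, ?_⟩
  · rw [← hT.1, hTJ, Finset.card_image_of_injOn hinj]
  · intro i hi hi1
    exact hT.2.2 _ ((hmemJ i).mp hi) _ ((hmemJ (i + 1)).mp hi1) (ear_cross_adj (by omega) i)

lemma six_case {T : Finset (Sym2 (ZMod 6))} (hT : IsTriangulation 6 T)
    (hear : ∀ e ∈ T, IsEar 6 e) :
    rotTri 6 T ≠ T ∧ rotTri 6 (rotTri 6 T) = T := by
  obtain ⟨J, hTJ, hcard, hadj⟩ := ear_repr (by norm_num) hT hear
  have hJ46 : J = {0, 2, 4} ∨ J = ({1, 3, 5} : Finset (ZMod 6)) := by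
    have key : ∀ K : Finset (ZMod 6), K.card = 3 →
        (∀ i : ZMod 6, i ∈ K → i + 1 ∈ K → False) →
        (K = {0, 2, 4} ∨ K = {1, 3, 5}) := by decide
    exact key J hcard hadj
  rcases hJ46 with h | h <;> rw [hTJ, h] <;> exact ⟨by decide, by decide⟩


/-- A rotation orbit of triangulations of the `n`-gon (`n ≥ 4`) has size exactly `2`
if and only if `n ∈ {4, 6}` and every triangulation in the orbit consists only of ears. -/
theorem rotation_orbit_size_two_iff (n : ℕ) (hn : 4 ≤ n)
    (T : Finset (Sym2 (ZMod n))) (hT : IsTriangulation n T) :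
    (rotOrbit n T).ncard = 2 ↔
      ((n = 4 ∨ n = 6) ∧ ∀ S ∈ rotOrbit n T, ∀ e ∈ S, IsEar n e) := by
  have : NeZero n := ⟨by omega⟩
  constructor
  · intro hcard2
    obtain ⟨h1, h2⟩ := ncard_two_imp n T hcard2
    have hear := ears_of_period_two hn hT h2
    refine ⟨?_, ?_⟩
    · rcases eq_or_ne n 4 with h | h
      · exact Or.inl h
      · exact Or.inr (eq_six (by omega) hT h2)
    · rintro S ⟨k, rfl⟩ e he
      rw [rotTri_iterate] at he
      obtain ⟨e', he', rfl⟩ := Finset.mem_image.mp he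
      obtain ⟨i, rfl⟩ := hear e' he'
      refine ⟨i + (k : ZMod n), ?_⟩
      rw [Sym2.map_pair_eq, show i + 2 + (k : ZMod n) = i + (k : ZMod n) + 2 by ring]
  · rintro ⟨hn46, hear⟩
    have hearT : ∀ e ∈ T, IsEar n e := hear T ⟨0, rfl⟩
    have key : rotTri n T ≠ T ∧ rotTri n (rotTri n T) = T := by
      rcases hn46 with rfl | rfl
      · exact four_case hT
      · exact six_case hT hearT
    rw [orbit_eq_pair n T key.2, Set.ncard_pair (Ne.symm key.1)]
end

section
/- For every n ≥ 4 and every triangulation T of the n-gon, T and its rotation r(T) are disjoint, i.e., T ∩ r(T) = ∅. -/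
lemma val_sub_one_lt {n : ℕ} [NeZero n] {x : ZMod n} (hx : x ≠ 0) :
    (x - 1).val < x.val := by
  have h1 : 1 ≤ x.val := Nat.one_le_iff_ne_zero.mpr (by
    simpa [ZMod.val_eq_zero] using hx)
  have hxx : x - 1 = ((x.val - 1 : ℕ) : ZMod n) := by
    rw [Nat.cast_sub h1]
    simp [ZMod.natCast_val, ZMod.cast_id]
  rw [hxx, ZMod.val_cast_of_lt (by have := x.val_lt; omega)]
  omega

lemma val_sub_one_pos {n : ℕ} [NeZero n] {x : ZMod n} (hx : x ≠ 1) :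
    0 < (x - 1).val := by
  have : x - 1 ≠ 0 := fun h => hx (by linear_combination h)
  exact Nat.pos_of_ne_zero (fun h => this ((ZMod.val_eq_zero _).mp h))

/-- For every `n ≥ 4` and every triangulation `T` of the `n`-gon,
`T` and its rotation `r(T)` share no diagonal. -/
theorem triangulation_disjoint_rotation (n : ℕ) (hn : 4 ≤ n)
    (T : Finset (Sym2 (ZMod n))) (hT : IsTriangulation n T) :
    Disjoint T (rotTri n T) := by
  have : NeZero n := ⟨by omega⟩
  rw [Finset.disjoint_left]
  rintro e heT herT
  rw [rotTri, Finset.mem_image] at herT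
  obtain ⟨f, hfT, hfe⟩ := herT
  induction f using Sym2.ind with
  | _ a b =>
  have hdiag := hT.2.1 _ hfT
  obtain ⟨i, j, hij, h0, h1, h2⟩ := hdiag
  have hab : a - b ≠ 0 ∧ a - b ≠ 1 ∧ a - b ≠ -1 := by
    rw [Sym2.eq_iff] at hij
    rcases hij with ⟨rfl, rfl⟩ | ⟨rfl, rfl⟩
    · exact ⟨h0, h1, h2⟩
    · refine ⟨fun h => h0 ?_, fun h => h2 ?_, fun h => h1 ?_⟩ <;>
        linear_combination -h
  have hrot : rotDiag n s(a, b) = s(a + 1, b + 1) := rfl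
  apply hT.2.2 e heT _ hfT
  refine ⟨a + 1, b + 1, b, a, hfe.symm.trans hrot, Sym2.eq_swap, ?_, ?_⟩
  · refine ⟨?_, ?_⟩
    · have : b - (a + 1) = (b - a) - 1 := by ring
      rw [this]
      apply val_sub_one_pos
      intro h
      exact hab.2.2 (by linear_combination -h)
    · have e1 : b - (a + 1) = (b - a) - 1 := by ring
      have e2 : (b + 1) - (a + 1) = b - a := by ring
      rw [e1, e2]
      apply val_sub_one_lt
      intro h
      exact hab.1 (by linear_combination -h)
  · refine ⟨?_, ?_⟩
    · have : a - (b + 1) = (a - b) - 1 := by ring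
      rw [this]
      exact val_sub_one_pos hab.2.1
    · have e1 : a - (b + 1) = (a - b) - 1 := by ring
      have e2 : (a + 1) - (b + 1) = a - b := by ring
      rw [e1, e2]
      exact val_sub_one_lt hab.1
end

section
/- For every n ≥ 4, the Kneser graph KG(Perm_n) of the permutohedron contains a Hamiltonian cycle. -/
open scoped Fin.CommRing Fin.NatCast

/-- cyclic window `[b, b+k)` in `Fin n`. -/
def Wdw (n : ℕ) (b : Fin n) (k : ℕ) : Set (Fin n) := {x | ((x - b : Fin n) : ℕ) < k}

namespace KGaux
variable {n : ℕ} [NeZero n]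

lemma fsv (a b : Fin n) :
    ((a - b : Fin n) : ℕ) = if (b : ℕ) ≤ (a : ℕ) then (a : ℕ) - b else (a : ℕ) + n - b := by
  have hb := b.isLt
  have ha := a.isLt
  rw [Fin.sub_def]
  simp only
  split
  · have h1 : n - (b : ℕ) + a = ((a : ℕ) - b) + n := by omega
    rw [h1, Nat.add_mod_right, Nat.mod_eq_of_lt (by omega)]
  · rw [Nat.mod_eq_of_lt (by omega)]
    omega

lemma mem_Wdw {b x : Fin n} {k : ℕ} : x ∈ Wdw n b k ↔ ((x - b : Fin n) : ℕ) < k := Iff.rfl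

lemma self_mem_Wdw {b : Fin n} {k : ℕ} (hk : 1 ≤ k) : b ∈ Wdw n b k := by
  simp [mem_Wdw, sub_self, Fin.val_zero, hk]
  omega

lemma Wdw_inj {b b' : Fin n} {k : ℕ} (hk1 : 1 ≤ k) (hk2 : k ≤ n - 1)
    (h : Wdw n b k = Wdw n b' k) : b = b' := by
  have hn : 0 < n := Nat.pos_of_ne_zero (NeZero.ne n)
  have hkn : k < n := by omega
  by_contra hne
  have hd : b' ∈ Wdw n b k := h.symm ▸ self_mem_Wdw hk1
  rw [mem_Wdw] at hd
  have hd0 : ((b' - b : Fin n) : ℕ) ≠ 0 := by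
    intro h0
    have hz : b' - b = 0 := Fin.ext (by simpa using h0)
    exact hne (sub_eq_zero.mp hz).symm
  set x : Fin n := b + (k : Fin n) with hx
  have hxk : ((x - b : Fin n) : ℕ) = k := by
    rw [hx, add_sub_cancel_left, Fin.val_cast_of_lt hkn]
  have hx1 : x ∉ Wdw n b k := by rw [mem_Wdw, hxk]; omega
  have hx2 : x ∈ Wdw n b' k := by
    rw [mem_Wdw]
    have : x - b' = (b + (k : Fin n)) - b' := by rw [hx]
    have h2 : x - b' = (k : Fin n) - (b' - b) := by rw [hx]; ring
    rw [h2, fsv, Fin.val_cast_of_lt hkn]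
    split <;> omega
  rw [← h] at hx2
  exact hx1 hx2

lemma firstK_eq_Wdw (k : ℕ) : firstK n k = Wdw n 0 k := by
  ext x
  simp [firstK, mem_Wdw, sub_zero]

lemma addRight_image_Wdw (c : Fin n) (k : ℕ) :
    (⇑(Equiv.addRight c)) '' Wdw n 0 k = Wdw n c k := by
  ext x
  simp only [Set.mem_image, mem_Wdw, Equiv.coe_addRight]
  constructor
  · rintro ⟨y, hy, rfl⟩
    rwa [add_sub_cancel_right, ← sub_zero y]
  · intro hx
    exact ⟨x - c, by rwa [sub_zero], sub_add_cancel x c⟩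

lemma symm_preimage (U : Equiv.Perm (Fin n)) (S : Set (Fin n)) :
    (⇑U.symm) ⁻¹' S = ⇑U '' S := by
  rw [Equiv.image_eq_preimage_symm]

end KGaux

namespace KGaux
variable {n : ℕ} [NeZero n]

/-- `τ` maps the window `{b, b+1}` to some window `{m, m+1}`. -/
def IsPairW (τ : Equiv.Perm (Fin n)) (b : Fin n) : Prop :=
  ∃ m, ⇑τ '' Wdw n b 2 = Wdw n m 2

lemma val_one (hn : 2 ≤ n) : ((1 : Fin n) : ℕ) = 1 := by
  rw [Fin.val_one']
  exact Nat.mod_eq_of_lt (by omega)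

lemma Wdw_two (hn : 2 ≤ n) (b : Fin n) : Wdw n b 2 = {b, b + 1} := by
  have hv := val_one hn
  ext x
  simp only [mem_Wdw, Set.mem_insert_iff, Set.mem_singleton_iff]
  constructor
  · intro h
    have h2 : ((x - b : Fin n) : ℕ) = 0 ∨ ((x - b : Fin n) : ℕ) = 1 := by omega
    rcases h2 with h' | h'
    · left
      have : x - b = 0 := Fin.ext (by simpa using h')
      exact sub_eq_zero.mp this
    · right
      have : x - b = 1 := Fin.ext (by omega)
      have := sub_eq_iff_eq_add.mp this
      rw [this]; ring
  · rintro (rfl | rfl)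
    · simp [sub_self]
    · have h1 : b + 1 - b = 1 := by ring
      rw [h1]
      omega

lemma pair_step {τ : Equiv.Perm (Fin n)} {b : Fin n} (hn : 4 ≤ n) (hp : IsPairW τ b) :
    τ (b + 1) = τ b + 1 ∨ τ (b + 1) = τ b - 1 := by
  have h2 : 2 ≤ n := by omega
  obtain ⟨m, hm⟩ := hp
  rw [Wdw_two h2, Wdw_two h2, Set.image_pair] at hm
  rcases Set.pair_eq_pair_iff.mp hm with ⟨h1, h2'⟩ | ⟨h1, h2'⟩
  · left; rw [h2', h1]
  · right; rw [h2', h1]; ring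

lemma cast_inj_of_lt {a b : ℕ} (ha : a < n) (hb : b < n) (h : (a : Fin n) = (b : Fin n)) :
    a = b := by
  have := congrArg Fin.val h
  rwa [Fin.val_cast_of_lt ha, Fin.val_cast_of_lt hb] at this

lemma dihedral (hn : 4 ≤ n) (τ : Equiv.Perm (Fin n)) (b0 : Fin n)
    (hp : ∀ b, b ≠ b0 → IsPairW τ b) :
    (∃ c, ∀ x, τ x = x + c) ∨ (∃ c, ∀ x, τ x = c - x) := by
  have h2n : 2 ≤ n := by omega
  have hone : (1 : Fin n) ≠ 0 := by
    intro h
    have := congrArg Fin.val h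
    rw [val_one h2n] at this
    simp at this
  have hb01 : b0 + 1 ≠ b0 := by
    intro h
    have : (1 : Fin n) = 0 := by
      have := sub_eq_zero.mpr h
      rwa [add_sub_cancel_left] at this
    exact hone this
  have hstep : ∀ b, b ≠ b0 → τ (b + 1) = τ b + 1 ∨ τ (b + 1) = τ b - 1 :=
    fun b hb => pair_step hn (hp b hb)
  set s : Fin n := τ (b0 + 1 + 1) - τ (b0 + 1) with hs_def
  have hs : s = 1 ∨ s = -1 := by
    rcases hstep (b0 + 1) hb01 with h | h
    · left; rw [hs_def, h]; ring
    · right; rw [hs_def, h]; ring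
  have hs1 : τ (b0 + 1 + 1) = τ (b0 + 1) + s := by rw [hs_def]; ring
  have key : ∀ t : ℕ, t ≤ n - 1 → τ (b0 + 1 + (t : Fin n)) = τ (b0 + 1) + (t : Fin n) * s := by
    intro t
    induction t using Nat.strong_induction_on with
    | _ t ih =>
      intro ht
      match t with
      | 0 => simp
      | 1 => simpa [val_one h2n, one_mul] using hs1
      | (t' + 2) =>
        have ht1 : t' + 1 ≤ n - 1 := by omega
        have ht0 : t' ≤ n - 1 := by omega
        have IH1 := ih (t' + 1) (by omega) ht1
        have IH0 := ih t' (by omega) ht0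
        set b : Fin n := b0 + 1 + ((t' + 1 : ℕ) : Fin n) with hb_def
        have hbne : b ≠ b0 := by
          intro h
          have h1 : (1 : Fin n) + ((t' + 1 : ℕ) : Fin n) = 0 := by
            have := sub_eq_zero.mpr h
            rw [hb_def] at this
            have h2 : b0 + 1 + ((t' + 1 : ℕ) : Fin n) - b0 = 1 + ((t' + 1 : ℕ) : Fin n) := by ring
            rwa [h2] at this
          have h3 : ((t' + 2 : ℕ) : Fin n) = ((0 : ℕ) : Fin n) := by
            have hc : ((t' + 2 : ℕ) : Fin n) = 1 + ((t' + 1 : ℕ) : Fin n) := by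
              push_cast; ring
            rw [hc, h1, Nat.cast_zero]
          have := cast_inj_of_lt (by omega) (by omega) h3
          omega
        have hb1 : b + 1 = b0 + 1 + ((t' + 2 : ℕ) : Fin n) := by
          rw [hb_def]; push_cast; ring
        rcases hstep b hbne with h | h
        · rcases hs with hs' | hs'
          · -- s = 1, step +1 : consistent
            rw [hb1] at h
            rw [h, IH1, hs']
            push_cast
            ring
          · -- s = -1, step +1 : contradiction via injectivity
            exfalso
            have : τ (b + 1) = τ (b0 + 1 + ((t' : ℕ) : Fin n)) := by
              rw [h, IH1, IH0, hs']
              push_cast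
              ring
            have heq := τ.injective this
            rw [hb1] at heq
            have : ((t' + 2 : ℕ) : Fin n) = ((t' : ℕ) : Fin n) := by
              have := sub_eq_zero.mpr heq
              have h2 : b0 + 1 + ((t' + 2 : ℕ) : Fin n) - (b0 + 1 + ((t' : ℕ) : Fin n))
                  = ((t' + 2 : ℕ) : Fin n) - ((t' : ℕ) : Fin n) := by ring
              rw [h2] at this
              exact sub_eq_zero.mp this
            have := cast_inj_of_lt (by omega) (by omega) this
            omega
        · rcases hs with hs' | hs'
          · -- s = 1, step -1 : contradiction
            exfalso
            have : τ (b + 1) = τ (b0 + 1 + ((t' : ℕ) : Fin n)) := by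
              rw [h, IH1, IH0, hs']
              push_cast
              ring
            have heq := τ.injective this
            rw [hb1] at heq
            have : ((t' + 2 : ℕ) : Fin n) = ((t' : ℕ) : Fin n) := by
              have := sub_eq_zero.mpr heq
              have h2 : b0 + 1 + ((t' + 2 : ℕ) : Fin n) - (b0 + 1 + ((t' : ℕ) : Fin n))
                  = ((t' + 2 : ℕ) : Fin n) - ((t' : ℕ) : Fin n) := by ring
              rw [h2] at this
              exact sub_eq_zero.mp this
            have := cast_inj_of_lt (by omega) (by omega) this
            omega
          · rw [hb1] at h
            rw [h, IH1, hs']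
            push_cast
            ring
  have hτx : ∀ x, τ x = τ (b0 + 1) + (x - (b0 + 1)) * s := by
    intro x
    have h1 := key ((x - (b0 + 1)).val) (by omega)
    rw [Fin.cast_val_eq_self] at h1
    have h2 : b0 + 1 + (x - (b0 + 1)) = x := by ring
    rwa [h2] at h1
  rcases hs with hs' | hs'
  · left
    exact ⟨τ (b0 + 1) - (b0 + 1), fun x => by rw [hτx x, hs']; ring⟩
  · right
    exact ⟨τ (b0 + 1) + (b0 + 1), fun x => by rw [hτx x, hs']; ring⟩

end KGaux

namespace KGaux
variable {n : ℕ} [NeZero n]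

lemma lemT (hn : 4 ≤ n) (τ : Equiv.Perm (Fin n)) (hτ0 : τ 0 = 0)
    (hτ1 : τ ≠ Equiv.refl (Fin n)) (f f' : Fin n) :
    ∃ i b : Fin n, i ≠ f ∧ b ≠ f' ∧
      ∀ k : ℕ, 1 ≤ k → k ≤ n - 1 → ⇑τ '' Wdw n b k ≠ Wdw n i k := by
  classical
  by_cases hA : ∃ b, b ≠ f' ∧ ¬ IsPairW τ b
  · obtain ⟨b, hbf, hbp⟩ := hA
    set g : ℕ → Fin n := fun k =>
      if h : ∃ m, ⇑τ '' Wdw n b k = Wdw n m k then h.choose else f with hg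
    set S : Finset (Fin n) := insert f (((Finset.Icc 1 (n - 1)).erase 2).image g) with hS
    have hcard : S.card < n := by
      have h1 : S.card ≤ (((Finset.Icc 1 (n - 1)).erase 2).image g).card + 1 :=
        Finset.card_insert_le _ _
      have h2 : (((Finset.Icc 1 (n - 1)).erase 2).image g).card ≤
          ((Finset.Icc 1 (n - 1)).erase 2).card := Finset.card_image_le
      have h3 : ((Finset.Icc 1 (n - 1)).erase 2).card = (Finset.Icc 1 (n - 1)).card - 1 :=
        Finset.card_erase_of_mem (by simp only [Finset.mem_Icc]; omega)
      have h4 : (Finset.Icc 1 (n - 1)).card = n - 1 := by rw [Nat.card_Icc]; omega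
      omega
    have hex2 : ∃ i : Fin n, i ∉ S := by
      by_contra hcon
      push_neg at hcon
      have hsub : (Finset.univ : Finset (Fin n)) ⊆ S := fun x _ => hcon x
      have := Finset.card_le_card hsub
      rw [Finset.card_univ, Fintype.card_fin] at this
      omega
    obtain ⟨i, hi⟩ := hex2
    refine ⟨i, b, ?_, hbf, ?_⟩
    · intro h; exact hi (h ▸ Finset.mem_insert_self f _)
    · intro k hk1 hk2 heq
      have hex : ∃ m, ⇑τ '' Wdw n b k = Wdw n m k := ⟨i, heq⟩
      rcases eq_or_ne k 2 with rfl | hk2'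
      · exact hbp ⟨i, heq⟩
      · apply hi
        rw [hS]
        apply Finset.mem_insert_of_mem
        apply Finset.mem_image.mpr
        refine ⟨k, ?_, ?_⟩
        · rw [Finset.mem_erase, Finset.mem_Icc]
          exact ⟨hk2', hk1, hk2⟩
        · rw [hg]
          simp only
          rw [dif_pos hex]
          have hspec := hex.choose_spec
          have heq2 : Wdw n hex.choose k = Wdw n i k := by rw [← hspec, heq]
          exact Wdw_inj hk1 hk2 heq2
  · push_neg at hA
    rcases dihedral hn τ f' hA with ⟨c, hc⟩ | ⟨c, hc⟩
    · exfalso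
      have hc0 : c = 0 := by
        have h0 := hc 0
        rw [hτ0, zero_add] at h0
        exact h0.symm
      exact hτ1 (Equiv.ext fun x => by rw [hc x, hc0, add_zero]; rfl)
    · have hc0 : c = 0 := by
        have h0 := hc 0
        rw [hτ0, sub_zero] at h0
        exact h0.symm
      have hneg : ∀ x, τ x = -x := fun x => by rw [hc x, hc0]; ring
      have hex2 : ∃ i : Fin n, i ∉ ({f, 1 - f'} : Finset (Fin n)) := by
        by_contra hcon
        push_neg at hcon
        have hsub : (Finset.univ : Finset (Fin n)) ⊆ {f, 1 - f'} := fun x _ => hcon x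
        have hle := Finset.card_le_card hsub
        rw [Finset.card_univ, Fintype.card_fin] at hle
        have : ({f, 1 - f'} : Finset (Fin n)).card ≤ 2 :=
          (Finset.card_insert_le _ _).trans (by simp)
        omega
      obtain ⟨i, hi⟩ := hex2
      rw [Finset.mem_insert, Finset.mem_singleton] at hi
      push_neg at hi
      refine ⟨i, 1 - i, hi.1, ?_, ?_⟩
      · intro h
        apply hi.2
        rw [← h]
        ring
      · intro k hk1 hk2 heq
        have hM : max k (n - k) < n := by omega
        set M := max k (n - k) with hMdef
        set x : Fin n := i + (M : Fin n) with hxdef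
        have hx1 : x ∉ Wdw n i k := by
          rw [mem_Wdw, hxdef, add_sub_cancel_left, Fin.val_cast_of_lt hM]
          omega
        have hx2 : -x ∈ Wdw n (1 - i) k := by
          rw [mem_Wdw]
          have hcast : ((M + 1 : ℕ) : Fin n) = (M : Fin n) + 1 := by push_cast; ring
          have hxe : -x - (1 - i) = 0 - (((M + 1 : ℕ) : Fin n)) := by
            rw [hxdef, hcast]; ring
          rw [hxe, fsv]
          have hv0 : ((0 : Fin n) : ℕ) = 0 := rfl
          have hvM : (((M + 1 : ℕ) : Fin n) : ℕ) = (M + 1) % n := by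
            rw [Fin.val_natCast]
          rw [hv0, hvM]
          rcases eq_or_lt_of_le (show M + 1 ≤ n by omega) with he | hlt
          · rw [he, Nat.mod_self]
            simp
            omega
          · rw [Nat.mod_eq_of_lt hlt, if_neg (by omega)]
            omega
        apply hx1
        rw [← heq]
        exact ⟨-x, hx2, by rw [hneg, neg_neg]⟩

end KGaux

namespace KGaux

open SimpleGraph

variable {V : Type*} [DecidableEq V]

lemma chain_snoc {R : V → V → Prop} :
    ∀ (x : V) (l : List V) (z : V), List.Chain R x l →
      R ((x :: l).getLast (List.cons_ne_nil _ _)) z → List.Chain R x (l ++ [z])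
  | x, [], z, _, hr => List.Chain.cons (by simpa using hr) List.Chain.nil
  | x, c :: l', z, hch, hr => by
    refine List.Chain.cons (List.rel_of_chain_cons hch) ?_
    refine chain_snoc c l' z (List.chain_of_chain_cons hch) ?_
    rwa [List.getLast_cons (List.cons_ne_nil _ _)] at hr

def mkWalk (G : SimpleGraph V) : (a : V) → (l : List V) → (b : V) →
    List.Chain G.Adj a (l ++ [b]) → G.Walk a b
  | _, [], _, h => SimpleGraph.Walk.cons (List.rel_of_chain_cons h) SimpleGraph.Walk.nil
  | _, c :: l, b, h =>
    SimpleGraph.Walk.cons (List.rel_of_chain_cons h) (mkWalk G c l b (List.chain_of_chain_cons h))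

lemma mkWalk_support (G : SimpleGraph V) :
    ∀ (a : V) (l : List V) (b : V) (h : List.Chain G.Adj a (l ++ [b])),
      (mkWalk G a l b h).support = a :: (l ++ [b])
  | _, [], _, _ => rfl
  | a, c :: l, b, h => by
    simp only [mkWalk, SimpleGraph.Walk.support_cons, mkWalk_support G c l b]
    exact congrArg _ (mkWalk_support G c l b _)

lemma mkWalk_edge_not_mem_aux (G : SimpleGraph V) :
    ∀ (l : List V) (x y u : V) (h : List.Chain G.Adj x (l ++ [y])),
      u ∉ x :: l → u ≠ y → s(y, u) ∉ (mkWalk G x l y h).edges := by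
  intro l
  induction l with
  | nil =>
    intro x y u h hu huy
    have hux : u ≠ x := fun hh => hu (hh ▸ List.mem_cons_self)
    simp only [mkWalk, SimpleGraph.Walk.edges_cons, SimpleGraph.Walk.edges_nil,
      List.mem_singleton]
    intro he
    rcases Sym2.eq_iff.mp he with ⟨_, h2⟩ | ⟨_, h2⟩
    · exact huy h2
    · exact hux h2
  | cons c l' ih =>
    intro x y u h hu huy
    have hux : u ≠ x := fun hh => hu (hh ▸ List.mem_cons_self)
    have huc : u ≠ c := fun hh => hu (hh ▸ List.mem_cons_of_mem _ (List.mem_cons_self))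
    simp only [mkWalk, SimpleGraph.Walk.edges_cons, List.mem_cons]
    rintro (he | he)
    · rcases Sym2.eq_iff.mp he with ⟨_, h2⟩ | ⟨_, h2⟩
      · exact huc h2
      · exact hux h2
    · exact ih c y u _ (fun hh => hu (List.mem_cons_of_mem _ hh)) huy he

lemma mkWalk_edge_not_mem (G : SimpleGraph V) :
    ∀ (l : List V) (x y : V) (h : List.Chain G.Adj x (l ++ [y])),
      (x :: l).Nodup → y ∉ x :: l → l ≠ [] → s(y, x) ∉ (mkWalk G x l y h).edges := by
  intro l x y h hnd hy hne
  match l, h, hnd, hy with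
  | c :: l', h, hnd, hy =>
  have hyx : y ≠ x := fun hh => hy (hh ▸ List.mem_cons_self)
  have hyc : y ≠ c := fun hh => hy (hh ▸ List.mem_cons_of_mem _ (List.mem_cons_self))
  have hx : x ∉ c :: l' := (List.nodup_cons.mp hnd).1
  simp only [mkWalk, SimpleGraph.Walk.edges_cons, List.mem_cons]
  rintro (he | he)
  · rcases Sym2.eq_iff.mp he with ⟨h1, _⟩ | ⟨h1, _⟩
    · exact hyx h1
    · exact hyc h1
  · exact mkWalk_edge_not_mem_aux G l' c y x _ hx hyx.symm he

lemma hamOfList [Fintype V] (G : SimpleGraph V) (l : List V)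
    (hchain : l.Chain' G.Adj) (hnd : l.Nodup) (hcov : ∀ v, v ∈ l) (hlen : 3 ≤ l.length)
    (hwrap : ∀ (h : l ≠ []), G.Adj (l.getLast h) (l.head h)) : G.IsHamiltonian := by
  intro _
  match l, hchain, hnd, hcov, hlen, hwrap with
  | a :: c :: l', hchain, hnd, hcov, hlen, hwrap =>
  have hl'ne : l' ≠ [] := by
    intro h
    subst h
    simp at hlen
  have hch : List.Chain G.Adj a (c :: l') := hchain
  have hwrap' : G.Adj ((c :: l').getLast (List.cons_ne_nil _ _)) a := by
    have := hwrap (List.cons_ne_nil _ _)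
    rwa [List.getLast_cons (List.cons_ne_nil _ _), List.head_cons] at this
  have hq_chain : List.Chain G.Adj c (l' ++ [a]) :=
    chain_snoc c l' a (List.chain_of_chain_cons hch) hwrap'
  set q : G.Walk c a := mkWalk G c l' a hq_chain with hq
  have h_ac : G.Adj a c := List.rel_of_chain_cons hch
  refine ⟨a, SimpleGraph.Walk.cons h_ac q, ?_⟩
  rw [SimpleGraph.Walk.isHamiltonianCycle_iff_isCycle_and_support_count_tail_eq_one]
  have hsupq : q.support = c :: (l' ++ [a]) := mkWalk_support G c l' a hq_chain
  have hna : a ∉ c :: l' := by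
    rw [List.nodup_cons] at hnd
    exact hnd.1
  have hndcl : (c :: l').Nodup := (List.nodup_cons.mp hnd).2
  constructor
  · rw [SimpleGraph.Walk.cons_isCycle_iff]
    constructor
    · rw [SimpleGraph.Walk.isPath_def, hsupq]
      rw [show (c : V) :: (l' ++ [a]) = (c :: l') ++ [a] from rfl]
      rw [List.nodup_append]
      refine ⟨hndcl, List.nodup_singleton a, ?_⟩
      intro v hv w hv2 hvw
      subst hvw
      rw [List.mem_singleton] at hv2
      exact hna (hv2 ▸ hv)
    · exact mkWalk_edge_not_mem G l' c a hq_chain hndcl hna hl'ne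
  · intro v
    rw [SimpleGraph.Walk.support_cons, List.tail_cons, hsupq,
      show (c : V) :: (l' ++ [a]) = (c :: l') ++ [a] from rfl, List.count_append]
    rcases eq_or_ne v a with rfl | hv
    · rw [List.count_eq_zero_of_not_mem hna, List.count_singleton]
      simp
    · have hvm : v ∈ c :: l' := by
        have := hcov v
        rw [List.mem_cons] at this
        rcases this with h | h
        · exact absurd h hv
        · exact h
      rw [List.count_eq_one_of_mem hndcl hvm]
      have : List.count v [a] = 0 := by
        rw [List.count_eq_zero_of_not_mem]
        simp [hv]
      omega

end KGaux

namespace KGaux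
variable {n : ℕ} [NeZero n]

/-- the word `x ↦ P (x + c)`: member `c` of the rotation class of `P`. -/
def mw (P : Equiv.Perm (Fin n)) (c : Fin n) : Equiv.Perm (Fin n) :=
  (Equiv.addRight c).trans P

/-- the "quotient" word `P.symm ∘ Q`. -/
def tw (P Q : Equiv.Perm (Fin n)) : Equiv.Perm (Fin n) := Q.trans P.symm

/-- adjacency, stated on words. -/
def AdjW (n : ℕ) (U V : Equiv.Perm (Fin n)) : Prop := (KGPerm n).Adj U.symm V.symm

lemma mw_image (P : Equiv.Perm (Fin n)) (c : Fin n) (k : ℕ) :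
    ⇑(mw P c) '' Wdw n 0 k = ⇑P '' Wdw n c k := by
  rw [mw, Equiv.coe_trans, Set.image_comp, addRight_image_Wdw]

lemma tw_image (P Q : Equiv.Perm (Fin n)) (S : Set (Fin n)) :
    ⇑(tw P Q) '' S = ⇑P.symm '' (⇑Q '' S) := by
  rw [tw, Equiv.coe_trans, Set.image_comp]

lemma adjMembers (hn : 4 ≤ n) (P Q : Equiv.Perm (Fin n)) (c b : Fin n)
    (h : ∀ k : ℕ, 1 ≤ k → k ≤ n - 1 → ⇑(tw P Q) '' Wdw n b k ≠ Wdw n c k) :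
    (KGPerm n).Adj (mw P c).symm (mw Q b).symm := by
  have hpref : ∀ k : ℕ, 1 ≤ k → k ≤ n - 1 →
      ⇑P '' Wdw n c k ≠ ⇑Q '' Wdw n b k := by
    intro k hk1 hk2 heq
    apply h k hk1 hk2
    rw [tw_image, ← heq, Equiv.symm_image_image]
  constructor
  · intro heq
    have hUV : mw P c = mw Q b := by
      have := congrArg Equiv.symm heq
      simpa using this
    apply hpref 1 le_rfl (by omega)
    rw [← mw_image P c 1, ← mw_image Q b 1, hUV]
  · intro k hk1 hk2 heq
    rw [symm_preimage, symm_preimage, firstK_eq_Wdw, mw_image, mw_image] at heq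
    exact hpref k hk1 hk2 heq

lemma mw_inj {P Q : Equiv.Perm (Fin n)} {c c' : Fin n} (hP : P 0 = 0) (hQ : Q 0 = 0)
    (h : mw P c = mw Q c') : P = Q ∧ c = c' := by
  have happ : ∀ x, P (x + c) = Q (x + c') := by
    intro x
    have := congrArg (fun (E : Equiv.Perm (Fin n)) => E x) h
    simpa [mw] using this
  have h1 := happ (-c)
  rw [neg_add_cancel, hP] at h1
  have h2 : Q (-c + c') = Q 0 := by rw [← h1, hQ]
  have hd := Q.injective h2
  have hcc : c = c' := neg_add_eq_zero.mp hd
  subst hcc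
  refine ⟨Equiv.ext fun y => ?_, rfl⟩
  have := happ (y - c)
  rwa [sub_add_cancel] at this

end KGaux

namespace KGaux
variable {n : ℕ} [NeZero n]

open Classical in
noncomputable def pickT (n : ℕ) [NeZero n] (τ : Equiv.Perm (Fin n)) (f f' : Fin n) :
    Fin n × Fin n :=
  if h : ∃ i b : Fin n, i ≠ f ∧ b ≠ f' ∧
      ∀ k : ℕ, 1 ≤ k → k ≤ n - 1 → ⇑τ '' Wdw n b k ≠ Wdw n i k
  then (h.choose, h.choose_spec.choose) else (0, 0)

lemma pickT_spec (hn : 4 ≤ n) (τ : Equiv.Perm (Fin n)) (hτ0 : τ 0 = 0)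
    (hτ1 : τ ≠ Equiv.refl (Fin n)) (f f' : Fin n) :
    (pickT n τ f f').1 ≠ f ∧ (pickT n τ f f').2 ≠ f' ∧
      ∀ k : ℕ, 1 ≤ k → k ≤ n - 1 →
        ⇑τ '' Wdw n (pickT n τ f f').2 k ≠ Wdw n (pickT n τ f f').1 k := by
  have h := lemT hn τ hτ0 hτ1 f f'
  rw [pickT, dif_pos h]
  have hs := h.choose_spec.choose_spec
  exact ⟨hs.1, hs.2.1, hs.2.2⟩

lemma tw_zero {P Q : Equiv.Perm (Fin n)} (hP : P 0 = 0) (hQ : Q 0 = 0) : tw P Q 0 = 0 := by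
  have : P.symm 0 = 0 := by
    rw [← hP, Equiv.symm_apply_apply, hP]
  simp [tw, hQ, this]

lemma tw_ne_refl {P Q : Equiv.Perm (Fin n)} (hPQ : P ≠ Q) : tw P Q ≠ Equiv.refl (Fin n) := by
  intro h
  apply hPQ
  apply Equiv.ext
  intro x
  have := congrArg (fun (E : Equiv.Perm (Fin n)) => E x) h
  simp only [tw, Equiv.trans_apply, Equiv.refl_apply] at this
  have h2 := congrArg P this
  rw [Equiv.apply_symm_apply] at h2
  exact h2.symm

noncomputable def idxList (n : ℕ) [NeZero n] (e x : Fin n) : List (Fin n) :=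
  e :: (((Finset.univ : Finset (Fin n)).erase e).erase x).toList ++ [x]

lemma idxList_nodup (e x : Fin n) (hex : e ≠ x) : (idxList n e x).Nodup := by
  rw [idxList]
  rw [show (e :: (((Finset.univ : Finset (Fin n)).erase e).erase x).toList ++ [x])
      = e :: ((((Finset.univ : Finset (Fin n)).erase e).erase x).toList ++ [x]) from rfl]
  rw [List.nodup_cons, List.nodup_append]
  refine ⟨?_, Finset.nodup_toList _, List.nodup_singleton x, ?_⟩
  · intro hmem
    rw [List.mem_append] at hmem
    rcases hmem with hmem | hmem
    · rw [Finset.mem_toList, Finset.mem_erase, Finset.mem_erase] at hmem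
      exact hmem.2.1 rfl
    · rw [List.mem_singleton] at hmem
      exact hex hmem
  · intro v hv w hv2 hvw
    subst hvw
    rw [List.mem_singleton] at hv2
    rw [Finset.mem_toList, Finset.mem_erase] at hv
    exact hv.1 hv2

lemma idxList_mem (e x c : Fin n) : c ∈ idxList n e x := by
  simp only [idxList, List.mem_cons, List.mem_append, List.mem_singleton, Finset.mem_toList,
    Finset.mem_erase, Finset.mem_univ, and_true]
  tauto

lemma idxList_ne_nil (e x : Fin n) : idxList n e x ≠ [] := by
  rw [idxList]; exact List.cons_ne_nil _ _

lemma idxList_head? (e x : Fin n) : (idxList n e x).head? = some e := rfl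

lemma idxList_getLast? (e x : Fin n) : (idxList n e x).getLast? = some x := by
  rw [idxList]
  rw [show (e :: (((Finset.univ : Finset (Fin n)).erase e).erase x).toList ++ [x])
      = (e :: (((Finset.univ : Finset (Fin n)).erase e).erase x).toList) ++ [x] from rfl]
  rw [List.getLast?_append]
  rfl

/-- the listing of a clique class of `P`, entering at `e` and exiting at `x`. -/
noncomputable def seg (P : Equiv.Perm (Fin n)) (e x : Fin n) : List (Equiv.Perm (Fin n)) :=
  (idxList n e x).map (fun c => mw P c)

lemma seg_nodup (P : Equiv.Perm (Fin n)) {e x : Fin n} (hex : e ≠ x) : (seg P e x).Nodup := by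
  refine (idxList_nodup e x hex).map ?_
  intro c c' h
  have := congrArg (fun (E : Equiv.Perm (Fin n)) => E 0) h
  simp only [mw, Equiv.trans_apply, Equiv.coe_addRight, zero_add] at this
  exact P.injective this

lemma seg_mem_iff (P : Equiv.Perm (Fin n)) (e x : Fin n) (U : Equiv.Perm (Fin n)) :
    U ∈ seg P e x ↔ ∃ c, U = mw P c := by
  rw [seg, List.mem_map]
  constructor
  · rintro ⟨c, _, rfl⟩; exact ⟨c, rfl⟩
  · rintro ⟨c, rfl⟩; exact ⟨c, idxList_mem e x c, rfl⟩

lemma seg_chain' (hn : 4 ≤ n) (P : Equiv.Perm (Fin n)) {e x : Fin n} (hex : e ≠ x) :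
    List.Chain' (AdjW n) (seg P e x) := by
  rw [seg]; unfold List.Chain'; rw [List.isChain_map]
  have hne : List.Chain' (fun c c' : Fin n => c ≠ c') (idxList n e x) :=
    (idxList_nodup e x hex).isChain
  refine hne.imp ?_
  intro c c' hcc
  apply adjMembers hn
  intro k hk1 hk2
  rw [show tw P P = Equiv.refl (Fin n) from Equiv.self_trans_symm P]
  rw [Equiv.coe_refl, Set.image_id]
  intro h
  exact hcc (Wdw_inj hk1 hk2 h).symm

lemma seg_head? (P : Equiv.Perm (Fin n)) (e x : Fin n) :
    (seg P e x).head? = some (mw P e) := by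
  rw [seg, List.head?_map, idxList_head?]; rfl

lemma seg_getLast? (P : Equiv.Perm (Fin n)) (e x : Fin n) :
    (seg P e x).getLast? = some (mw P x) := by
  rw [seg, List.getLast?_map, idxList_getLast?]; rfl

lemma seg_ne_nil (P : Equiv.Perm (Fin n)) (e x : Fin n) : seg P e x ≠ [] := by
  rw [seg]
  intro h
  exact idxList_ne_nil e x (List.map_eq_nil_iff.mp h)

end KGaux

namespace KGaux

noncomputable def build (n : ℕ) [NeZero n] (xw : Fin n) :
    Equiv.Perm (Fin n) → Fin n → List (Equiv.Perm (Fin n)) → List (Equiv.Perm (Fin n))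
  | P, e, [] => seg P e xw
  | P, e, Q :: L =>
    seg P e (pickT n (tw P Q) e xw).1 ++ build n xw Q (pickT n (tw P Q) e xw).2 L

variable {n : ℕ} [NeZero n]

lemma build_spec (hn : 4 ≤ n) (xw : Fin n) :
    ∀ (L : List (Equiv.Perm (Fin n))) (P : Equiv.Perm (Fin n)) (e : Fin n),
      P 0 = 0 → (∀ Q ∈ L, Q 0 = 0) → (P :: L).Nodup → (L = [] → e ≠ xw) →
      (∀ U, U ∈ build n xw P e L ↔ ∃ Q, Q ∈ P :: L ∧ ∃ c, U = mw Q c) ∧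
      (build n xw P e L).Nodup ∧
      List.Chain' (AdjW n) (build n xw P e L) ∧
      (build n xw P e L).head? = some (mw P e) ∧
      (build n xw P e L).getLast? =
        some (mw ((P :: L).getLast (List.cons_ne_nil _ _)) xw) := by
  intro L
  induction L with
  | nil =>
    intro P e hP _ _ He
    have hex : e ≠ xw := He rfl
    refine ⟨?_, seg_nodup P hex, seg_chain' hn P hex, seg_head? P e xw, ?_⟩
    · intro U
      rw [show build n xw P e [] = seg P e xw from rfl, seg_mem_iff]
      constructor
      · rintro ⟨c, rfl⟩
        exact ⟨P, List.mem_cons_self, c, rfl⟩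
      · rintro ⟨Q, hQ, c, rfl⟩
        have : Q = P := by
          rw [List.mem_cons] at hQ
          rcases hQ with h | h
          · exact h
          · exact absurd h (List.not_mem_nil)
        rw [this]
        exact ⟨c, rfl⟩
    · rw [show build n xw P e [] = seg P e xw from rfl, seg_getLast? P e xw]
      rfl
  | cons Q L ih =>
    intro P e hP hL hnd He
    have hQ0 : Q 0 = 0 := hL Q (List.mem_cons_self)
    have hPQ : P ≠ Q := by
      intro h
      rw [List.nodup_cons] at hnd
      exact hnd.1 (h ▸ List.mem_cons_self)
    have hspec := pickT_spec hn (tw P Q) (tw_zero hP hQ0) (tw_ne_refl hPQ) e xw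
    obtain ⟨hpk1, hpk2, hpkT⟩ := hspec
    have hIH := ih Q (pickT n (tw P Q) e xw).2 hQ0
      (fun Q' h => hL Q' (List.mem_cons_of_mem _ h))
      (List.nodup_cons.mp hnd).2 (fun _ => hpk2)
    obtain ⟨ihmem, ihnd, ihch, ihhd, ihlast⟩ := hIH
    have hbeq : build n xw P e (Q :: L) =
        seg P e (pickT n (tw P Q) e xw).1 ++
          build n xw Q (pickT n (tw P Q) e xw).2 L := rfl
    have hex : e ≠ (pickT n (tw P Q) e xw).1 := (Ne.symm hpk1)
    have hPnotin : P ∉ Q :: L := (List.nodup_cons.mp hnd).1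
    refine ⟨?_, ?_, ?_, ?_, ?_⟩
    · intro U
      rw [hbeq, List.mem_append, seg_mem_iff, ihmem]
      constructor
      · rintro (⟨c, rfl⟩ | ⟨Q', hQ', c, rfl⟩)
        · exact ⟨P, List.mem_cons_self, c, rfl⟩
        · exact ⟨Q', List.mem_cons_of_mem _ hQ', c, rfl⟩
      · rintro ⟨Q', hQ', c, rfl⟩
        rw [List.mem_cons] at hQ'
        rcases hQ' with rfl | hQ'
        · exact Or.inl ⟨c, rfl⟩
        · exact Or.inr ⟨Q', hQ', c, rfl⟩
    · rw [hbeq, List.nodup_append]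
      refine ⟨seg_nodup P hex, ihnd, ?_⟩
      intro U hU U' hU2 hUU'
      subst hUU'
      rw [seg_mem_iff] at hU
      obtain ⟨c, rfl⟩ := hU
      rw [ihmem] at hU2
      obtain ⟨Q', hQ', c', hc'⟩ := hU2
      have := mw_inj hP (hL Q' hQ') hc'
      exact hPnotin (this.1 ▸ hQ')
    · rw [hbeq]
      apply List.IsChain.append (seg_chain' hn P hex) ihch
      intro U hU V hV
      rw [seg_getLast? P e _] at hU
      rw [ihhd] at hV
      rw [Option.mem_def, Option.some_inj] at hU hV
      rw [← hU, ← hV]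
      exact adjMembers hn P Q _ _ hpkT
    · rw [hbeq, List.head?_append, seg_head? P e _]
      rfl
    · rw [hbeq, List.getLast?_append, ihlast]
      rw [show ((P :: Q :: L).getLast (List.cons_ne_nil _ _))
          = ((Q :: L).getLast (List.cons_ne_nil _ _)) from List.getLast_cons (List.cons_ne_nil _ _)]
      rfl

end KGaux


open KGaux

/-- For every `n ≥ 4`, the Kneser graph of the permutohedron contains a
Hamiltonian cycle. -/
theorem kg_permutohedron_hamiltonian (n : ℕ) (hn : 4 ≤ n) :
    (KGPerm n).IsHamiltonian := by
  haveI : NeZero n := ⟨by omega⟩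
  classical
  set R : List (Equiv.Perm (Fin n)) :=
    (Finset.univ.filter (fun P : Equiv.Perm (Fin n) => P 0 = 0)).toList with hRdef
  have hRnd : R.Nodup := Finset.nodup_toList _
  have hRmem : ∀ P : Equiv.Perm (Fin n), P ∈ R ↔ P 0 = 0 := by
    intro P
    rw [hRdef, Finset.mem_toList, Finset.mem_filter]
    simp
  -- two distinct elements of R
  have hid : Equiv.refl (Fin n) ∈ R := (hRmem _).mpr rfl
  have hv1 : (((1 : ℕ) : Fin n) : ℕ) = 1 := Fin.val_cast_of_lt (by omega)
  have hv2 : (((2 : ℕ) : Fin n) : ℕ) = 2 := Fin.val_cast_of_lt (by omega)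
  set a1 : Fin n := ((1 : ℕ) : Fin n) with ha1
  set a2 : Fin n := ((2 : ℕ) : Fin n) with ha2
  have h01 : (0 : Fin n) ≠ a1 := by intro h; have := congrArg Fin.val h; rw [hv1] at this; simp at this
  have h02 : (0 : Fin n) ≠ a2 := by intro h; have := congrArg Fin.val h; rw [hv2] at this; simp at this
  have h12 : a1 ≠ a2 := by
    intro h; have := congrArg Fin.val h; rw [hv1, hv2] at this; omega
  have hsw : Equiv.swap a1 a2 ∈ R := by
    rw [hRmem]
    exact Equiv.swap_apply_of_ne_of_ne h01 h02
  have hswne : Equiv.refl (Fin n) ≠ Equiv.swap a1 a2 := by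
    intro h
    have := congrArg (fun (E : Equiv.Perm (Fin n)) => E a1) h
    simp only [Equiv.refl_apply, Equiv.swap_apply_left] at this
    exact h12 this
  -- destructure R
  rcases hRl : R with _ | ⟨P₀, L⟩
  · rw [hRl] at hid; exact absurd hid (List.not_mem_nil)
  rcases hLl : L with _ | ⟨Q₁, L'⟩
  · rw [hRl, hLl] at hid hsw
    rw [List.mem_singleton] at hid hsw
    exact absurd (hid.trans hsw.symm) hswne
  subst hLl
  rw [hRl] at hRnd hRmem
  have hP₀0 : P₀ 0 = 0 := (hRmem P₀).mp (List.mem_cons_self)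
  set Pl : Equiv.Perm (Fin n) := ((P₀ :: Q₁ :: L').getLast (List.cons_ne_nil _ _)) with hPl
  have hPlmem : Pl ∈ P₀ :: Q₁ :: L' := List.getLast_mem _
  have hPl0 : Pl 0 = 0 := (hRmem Pl).mp hPlmem
  have hPlP₀ : Pl ≠ P₀ := by
    have h1 : Pl ∈ Q₁ :: L' := by
      rw [hPl, List.getLast_cons (List.cons_ne_nil _ _)]
      exact List.getLast_mem _
    intro h
    rw [List.nodup_cons] at hRnd
    exact hRnd.1 (h ▸ h1)
  -- the wrap-around transition
  have hspec0 := pickT_spec hn (tw Pl P₀) (tw_zero hPl0 hP₀0) (tw_ne_refl hPlP₀) 0 0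
  set xw : Fin n := (pickT n (tw Pl P₀) 0 0).1 with hxw
  set e₀ : Fin n := (pickT n (tw Pl P₀) 0 0).2 with he₀
  -- the big word list
  have hbs := build_spec hn xw (Q₁ :: L') P₀ e₀ hP₀0
    (fun Q h => (hRmem Q).mp (List.mem_cons_of_mem _ h)) hRnd
    (fun h => absurd h (List.cons_ne_nil _ _))
  obtain ⟨hmem, hnd, hch, hhd, hlast⟩ := hbs
  set WL : List (Equiv.Perm (Fin n)) := build n xw P₀ e₀ (Q₁ :: L') with hWL
  have hWLne : WL ≠ [] := by
    intro h
    rw [h] at hhd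
    simp at hhd
  -- coverage of WL
  have hcovW : ∀ U : Equiv.Perm (Fin n), U ∈ WL := by
    intro U
    set c : Fin n := -(U.symm 0) with hc
    set Qr : Equiv.Perm (Fin n) := (Equiv.addRight c).symm.trans U with hQr
    have hmwQr : mw Qr c = U := by
      rw [mw, hQr, ← Equiv.trans_assoc, Equiv.self_trans_symm, Equiv.refl_trans]
    have hQr0 : Qr 0 = 0 := by
      rw [hQr]
      have hsy : (Equiv.addRight c).symm 0 = -c := by
        rw [Equiv.symm_apply_eq]
        simp [Equiv.coe_addRight]
      rw [Equiv.trans_apply, hsy, hc, neg_neg, Equiv.apply_symm_apply]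
    rw [hWL, (hmem U)]
    exact ⟨Qr, (hRmem Qr).mpr hQr0, c, hmwQr.symm⟩
  -- the vertex list
  set VL : List (Equiv.Perm (Fin n)) := WL.map Equiv.symm with hVL
  have hsymminj : Function.Injective (Equiv.symm : Equiv.Perm (Fin n) → Equiv.Perm (Fin n)) := by
    intro x y h
    rw [← Equiv.symm_symm x, h, Equiv.symm_symm]
  have hVLne : VL ≠ [] := by
    rw [hVL]
    intro h
    exact hWLne (List.map_eq_nil_iff.mp h)
  apply hamOfList (KGPerm n) VL
  · rw [hVL]; unfold List.Chain'; rw [List.isChain_map]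
    exact hch
  · exact hnd.map hsymminj
  · intro σ
    rw [hVL, List.mem_map]
    exact ⟨σ.symm, hcovW σ.symm, Equiv.symm_symm σ⟩
  · have hlen : VL.length = WL.length := by rw [hVL, List.length_map]
    have hfin : WL.toFinset = Finset.univ := by
      apply Finset.eq_univ_iff_forall.mpr
      intro U
      rw [List.mem_toFinset]
      exact hcovW U
    have hcard : WL.length = Fintype.card (Equiv.Perm (Fin n)) := by
      rw [← List.toFinset_card_of_nodup hnd, hfin, Finset.card_univ]
    have hcard2 : Fintype.card (Equiv.Perm (Fin n)) = Nat.factorial n := by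
      rw [Fintype.card_perm, Fintype.card_fin]
    have hfact : n ≤ Nat.factorial n := Nat.self_le_factorial n
    omega
  · intro h
    have hlastV : VL.getLast h = Equiv.symm (mw Pl xw) := by
      have h1 : VL.getLast? = some (Equiv.symm (mw Pl xw)) := by
        rw [hVL, List.getLast?_map, hlast]
        rfl
      rw [List.getLast?_eq_getLast h, Option.some_inj] at h1
      exact h1
    have hheadV : VL.head h = Equiv.symm (mw P₀ e₀) := by
      have h1 : VL.head? = some (Equiv.symm (mw P₀ e₀)) := by
        rw [hVL, List.head?_map, hhd]
        rfl
      rw [List.head?_eq_head h, Option.some_inj] at h1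
      exact h1
    rw [hlastV, hheadV]
    exact adjMembers hn Pl P₀ xw e₀ hspec0.2.2
end

section
/- Let n ≥ 2, let ρ ∈ S_n be the n-cycle sending i to i+1 (mod n, with representatives in {1,...,n}), and let H = ⟨ρ⟩. Then every right coset Hσ is a clique in the Kneser graph KG(Perm_n); equivalently, for every σ ∈ S_n, every i with 1 ≤ i ≤ n-1, and every k with 1 ≤ k ≤ n-1, one has σ⁻¹([k]) ≠ (ρ^i σ)⁻¹([k]). -/
lemma finRotate_pow_val (m i : ℕ) (a : Fin (m + 1)) :
    (((finRotate (m + 1)) ^ i) a : ℕ) = (a + i) % (m + 1) := by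
  induction i with
  | zero => simp [Nat.mod_eq_of_lt a.isLt]
  | succ i ih =>
    rw [pow_succ', Equiv.Perm.mul_apply, finRotate_succ_apply, Fin.val_add, ih,
      Fin.val_one', ← add_assoc, Nat.add_mod (↑a + i) 1]

/-- The right cosets of the cyclic group generated by the `n`-cycle
`ρ = finRotate n : i ↦ i + 1 (mod n)` are cliques in `KG(Perm_n)`: for every
`σ`, every `1 ≤ i ≤ n - 1` and every `1 ≤ k ≤ n - 1` one has
`σ⁻¹([k]) ≠ (ρ^i σ)⁻¹([k])`. -/
theorem rotation_cosets_are_cliques (n : ℕ) (hn : 2 ≤ n) (σ : Equiv.Perm (Fin n))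
    (i : ℕ) (hi1 : 1 ≤ i) (hi2 : i ≤ n - 1)
    (k : ℕ) (hk1 : 1 ≤ k) (hk2 : k ≤ n - 1) :
    (⇑σ) ⁻¹' (firstK n k) ≠ (⇑((finRotate n) ^ i * σ)) ⁻¹' (firstK n k) := by
  obtain ⟨m, rfl⟩ : ∃ m, n = m + 1 := ⟨n - 1, by omega⟩
  intro h
  set a : Fin (m + 1) := ⟨k - i, by omega⟩ with ha
  have h1 : σ.symm a ∈ (⇑σ) ⁻¹' (firstK (m + 1) k) := by
    simp only [Set.mem_preimage, Equiv.apply_symm_apply, firstK, Set.mem_setOf_eq, ha]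
    omega
  rw [h] at h1
  simp only [Set.mem_preimage, Equiv.Perm.mul_apply, Equiv.apply_symm_apply, firstK,
    Set.mem_setOf_eq] at h1
  rw [finRotate_pow_val] at h1
  have : (k - i + i) % (m + 1) = k - i + i := Nat.mod_eq_of_lt (by omega)
  simp only [ha] at h1
  omega
end

section
/- Let D_n denote the number of decomposable permutations in S_n. Then for every n ≥ 2, D_n ≤ n! · Σ_{p=1}^{n-1} (binomial(n,p))⁻¹. Consequently, there is a constant C > 0 such that for all n ≥ 2 the number I_n of indecomposable permutations in S_n satisfies I_n ≥ (1 - C/n) · n!. -/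
/-- A permutation of `{1, …, n}` is decomposable if `σ([p]) = [p]` for some
`1 ≤ p ≤ n - 1`. -/
def Decomposable (n : ℕ) (σ : Equiv.Perm (Fin n)) : Prop :=
  ∃ p : ℕ, 1 ≤ p ∧ p ≤ n - 1 ∧ (⇑σ) '' (firstK n p) = firstK n p

/-- The number of permutations stabilizing `[p]` is at most `p! (n-p)!`. -/
theorem stab_le (n p : ℕ) (hp : p ≤ n) :
    Nat.card {σ : Equiv.Perm (Fin n) // ⇑σ '' firstK n p = firstK n p} ≤
      p.factorial * (n - p).factorial := by
  classical
  have hmem : ∀ (σ : Equiv.Perm (Fin n)), ⇑σ '' firstK n p = firstK n p →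
      ∀ x : Fin n, ((x : ℕ) < p ↔ ((σ x : Fin n) : ℕ) < p) := by
    intro σ hσ x
    have h : σ x ∈ firstK n p ↔ x ∈ firstK n p := by
      conv_lhs => rw [← hσ]
      exact σ.injective.mem_set_image
    exact h.symm
  set s : Fin n → Prop := fun x => (x : ℕ) < p with hs
  let F : {σ : Equiv.Perm (Fin n) // ⇑σ '' firstK n p = firstK n p} →
      Equiv.Perm {x : Fin n // s x} × Equiv.Perm {x : Fin n // ¬ s x} :=
    fun σ => (σ.1.subtypePerm (fun x => (hmem σ.1 σ.2 x).symm),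
              σ.1.subtypePerm (fun x => not_congr (hmem σ.1 σ.2 x).symm))
  have hF : Function.Injective F := by
    intro σ τ h
    have h1 := congrArg Prod.fst h
    have h2 := congrArg Prod.snd h
    apply Subtype.ext
    apply Equiv.ext
    intro x
    by_cases hx : s x
    · have := congrArg (fun e : Equiv.Perm {x : Fin n // s x} =>
        (e ⟨x, hx⟩ : {x : Fin n // s x}).1) h1
      simpa [F] using this
    · have := congrArg (fun e : Equiv.Perm {x : Fin n // ¬ s x} =>
        (e ⟨x, hx⟩ : {x : Fin n // ¬ s x}).1) h2
      simpa [F] using this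
  calc Nat.card {σ : Equiv.Perm (Fin n) // ⇑σ '' firstK n p = firstK n p}
      ≤ Nat.card (Equiv.Perm {x : Fin n // s x} × Equiv.Perm {x : Fin n // ¬ s x}) :=
        Nat.card_le_card_of_injective F hF
    _ = p.factorial * (n - p).factorial := by
        have e1 : {x : Fin n // s x} ≃ Fin p :=
          ⟨fun x => ⟨x.1, x.2⟩, fun j => ⟨⟨j.1, lt_of_lt_of_le j.2 hp⟩, j.2⟩,
            fun x => by ext; rfl, fun j => rfl⟩
        have c1 : Fintype.card {x : Fin n // s x} = p := by
          rw [Fintype.card_congr e1, Fintype.card_fin]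
        have c2 : Fintype.card {x : Fin n // ¬ s x} = n - p := by
          rw [Fintype.card_subtype_compl, c1, Fintype.card_fin]
        rw [Nat.card_eq_fintype_card, Fintype.card_prod, Fintype.card_perm, Fintype.card_perm,
          c1, c2]

/-- The number of decomposable permutations is bounded by the sum of stabilizer sizes. -/
theorem D_le_sum (n : ℕ) :
    Nat.card {σ : Equiv.Perm (Fin n) // Decomposable n σ} ≤
      ∑ p ∈ Finset.Icc 1 (n - 1), p.factorial * (n - p).factorial := by
  classical
  rw [Nat.card_eq_fintype_card, Fintype.card_subtype]
  calc (Finset.univ.filter (fun σ => Decomposable n σ)).card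
      ≤ ((Finset.Icc 1 (n-1)).biUnion (fun p =>
          Finset.univ.filter
            (fun σ : Equiv.Perm (Fin n) => ⇑σ '' firstK n p = firstK n p))).card := by
        apply Finset.card_le_card
        intro σ hσ
        simp only [Finset.mem_filter, Finset.mem_univ, true_and] at hσ
        obtain ⟨p, hp1, hp2, hp3⟩ := hσ
        simp only [Finset.mem_biUnion, Finset.mem_Icc, Finset.mem_filter, Finset.mem_univ,
          true_and]
        exact ⟨p, ⟨hp1, hp2⟩, hp3⟩
    _ ≤ ∑ p ∈ Finset.Icc 1 (n-1),
          (Finset.univ.filter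
            (fun σ : Equiv.Perm (Fin n) => ⇑σ '' firstK n p = firstK n p)).card :=
        Finset.card_biUnion_le
    _ ≤ ∑ p ∈ Finset.Icc 1 (n - 1), p.factorial * (n - p).factorial := by
        apply Finset.sum_le_sum
        intro p hp
        rw [Finset.mem_Icc] at hp
        have := stab_le n p (by omega)
        rwa [Nat.card_eq_fintype_card, Fintype.card_subtype] at this

/-- Middle-term bound: for `2 ≤ p ≤ n - 2`, `p! (n-p)! ≤ 2 (n - 2)!`. -/
theorem mid_bound (n p : ℕ) (h2 : 2 ≤ p) (hn : p ≤ n - 2) :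
    p.factorial * (n - p).factorial ≤ 2 * (n - 2).factorial := by
  obtain ⟨q, hq⟩ : ∃ q, n - 2 = p + q := ⟨n - 2 - p, by omega⟩
  have hnp : n - p = q + 2 := by omega
  rw [hq, hnp]
  have key : (q + 2) * (q + 1) ≤ 2 * (p + q).choose q := by
    have h1 : (q + 2).choose q ≤ (p + q).choose q := Nat.choose_le_choose q (by omega)
    have h2' : (q + 2).choose q = (q + 2).choose 2 := by
      rw [← Nat.choose_symm (show 2 ≤ q + 2 by omega)]
      congr 1
    have h3 : (q + 2).choose 2 * 2 = (q + 2) * (q + 1) := by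
      have h := Nat.choose_mul_factorial_mul_factorial (show 2 ≤ q + 2 by omega)
      simp only [Nat.add_sub_cancel] at h
      apply Nat.eq_of_mul_eq_mul_right (Nat.factorial_pos q)
      calc (q + 2).choose 2 * 2 * q.factorial
          = (q + 2).choose 2 * Nat.factorial 2 * q.factorial := by norm_num [Nat.factorial]
        _ = (q + 2).factorial := h
        _ = (q + 2) * (q + 1) * q.factorial := by
            rw [Nat.factorial_succ, Nat.factorial_succ]; ring
    calc (q + 2) * (q + 1) = (q + 2).choose 2 * 2 := h3.symm
      _ = (q + 2).choose q * 2 := by rw [h2']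
      _ ≤ (p + q).choose q * 2 := Nat.mul_le_mul_right _ h1
      _ = 2 * (p + q).choose q := by ring
  have base : (p + q).choose q * q.factorial * p.factorial = (p + q).factorial := by
    have := Nat.choose_mul_factorial_mul_factorial (show q ≤ p + q by omega)
    simpa [Nat.add_sub_cancel] using this
  have expand : (q + 2).factorial = (q + 2) * ((q + 1) * q.factorial) := by
    rw [Nat.factorial_succ, Nat.factorial_succ]
  calc p.factorial * (q + 2).factorial
      = ((q + 2) * (q + 1)) * (q.factorial * p.factorial) := by rw [expand]; ring
    _ ≤ (2 * (p + q).choose q) * (q.factorial * p.factorial) :=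
        Nat.mul_le_mul_right _ key
    _ = 2 * ((p + q).choose q * q.factorial * p.factorial) := by ring
    _ = 2 * (p + q).factorial := by rw [base]

/-- The sum `Σ_{p=1}^{n-1} p! (n-p)!` is at most `4 (n-1)!`. -/
theorem sum_bound (n : ℕ) (hn : 2 ≤ n) :
    ∑ p ∈ Finset.Icc 1 (n - 1), p.factorial * (n - p).factorial ≤ 4 * (n - 1).factorial := by
  rcases Nat.lt_or_ge n 4 with h4 | h4
  · interval_cases n <;> decide
  · have hset : Finset.Icc 1 (n - 1) = insert 1 (insert (n - 1) (Finset.Icc 2 (n - 2))) := by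
      ext a
      simp only [Finset.mem_insert, Finset.mem_Icc]
      omega
    have h1 : (1 : ℕ) ∉ insert (n - 1) (Finset.Icc 2 (n - 2)) := by
      simp only [Finset.mem_insert, Finset.mem_Icc]
      omega
    have h2 : (n - 1) ∉ Finset.Icc 2 (n - 2) := by
      simp only [Finset.mem_Icc]
      omega
    rw [hset, Finset.sum_insert h1, Finset.sum_insert h2]
    have e1 : Nat.factorial 1 * (n - 1).factorial = (n - 1).factorial := by
      simp [Nat.factorial]
    have e2 : (n - (n - 1)) = 1 := by omega
    have e3 : (n - 1).factorial * (n - (n - 1)).factorial = (n - 1).factorial := by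
      rw [e2]; simp [Nat.factorial]
    have hsum : ∑ p ∈ Finset.Icc 2 (n - 2), p.factorial * (n - p).factorial ≤
        (n - 3) * (2 * (n - 2).factorial) := by
      calc ∑ p ∈ Finset.Icc 2 (n - 2), p.factorial * (n - p).factorial
          ≤ ∑ _p ∈ Finset.Icc 2 (n - 2), 2 * (n - 2).factorial :=
            Finset.sum_le_sum (fun p hp => by
              rw [Finset.mem_Icc] at hp
              exact mid_bound n p hp.1 hp.2)
        _ = (n - 3) * (2 * (n - 2).factorial) := by
            rw [Finset.sum_const, Nat.card_Icc, smul_eq_mul]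
            congr 1
    have hfac : (n - 1).factorial = (n - 1) * (n - 2).factorial := by
      conv_lhs => rw [show n - 1 = (n - 2) + 1 by omega]
      rw [Nat.factorial_succ]
      congr 1
      omega
    have hle : (n - 3) * (2 * (n - 2).factorial) ≤ 2 * (n - 1).factorial := by
      rw [hfac]
      calc (n - 3) * (2 * (n - 2).factorial) = 2 * ((n - 3) * (n - 2).factorial) := by ring
        _ ≤ 2 * ((n - 1) * (n - 2).factorial) :=
            Nat.mul_le_mul_left _ (Nat.mul_le_mul_right _ (by omega))
    rw [e1, e3]
    omega

/-- The number `D_n` of decomposable permutations in `S_n` satisfies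
`D_n ≤ n! · Σ_{p=1}^{n-1} (binomial(n,p))⁻¹` for every `n ≥ 2`; consequently there
is a constant `C > 0` such that the number `I_n` of indecomposable permutations
satisfies `I_n ≥ (1 - C/n) · n!` for all `n ≥ 2`. -/
theorem decomposable_count_bound :
    (∀ n : ℕ, 2 ≤ n →
      (Nat.card {σ : Equiv.Perm (Fin n) // Decomposable n σ} : ℚ) ≤
        (n.factorial : ℚ) * ∑ p ∈ Finset.Icc 1 (n - 1), ((n.choose p : ℚ))⁻¹) ∧
    ∃ C : ℚ, 0 < C ∧ ∀ n : ℕ, 2 ≤ n →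
      (1 - C / (n : ℚ)) * (n.factorial : ℚ) ≤
        (Nat.card {σ : Equiv.Perm (Fin n) // ¬ Decomposable n σ} : ℚ) := by
  constructor
  · intro n hn
    have hD := D_le_sum n
    have hterm : ∀ p ∈ Finset.Icc 1 (n - 1),
        ((p.factorial * (n - p).factorial : ℕ) : ℚ) = (n.factorial : ℚ) * ((n.choose p : ℚ))⁻¹ := by
      intro p hp
      rw [Finset.mem_Icc] at hp
      have hpn : p ≤ n := by omega
      have hchoose : (n.choose p : ℚ) ≠ 0 := by
        exact_mod_cast (Nat.choose_pos hpn).ne'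
      have hid : ((n.choose p : ℚ)) * ((p.factorial : ℚ) * ((n - p).factorial : ℚ))
          = (n.factorial : ℚ) := by
        exact_mod_cast congrArg (fun m : ℕ => (m : ℚ))
          (by rw [← mul_assoc]; exact Nat.choose_mul_factorial_mul_factorial hpn)
      push_cast
      field_simp
      linarith [hid]
    calc (Nat.card {σ : Equiv.Perm (Fin n) // Decomposable n σ} : ℚ)
        ≤ ((∑ p ∈ Finset.Icc 1 (n - 1), p.factorial * (n - p).factorial : ℕ) : ℚ) := by
          exact_mod_cast hD
      _ = ∑ p ∈ Finset.Icc 1 (n - 1), (n.factorial : ℚ) * ((n.choose p : ℚ))⁻¹ := by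
          push_cast [Nat.cast_sum]
          apply Finset.sum_congr rfl
          intro p hp
          have := hterm p hp
          push_cast at this
          exact this
      _ = (n.factorial : ℚ) * ∑ p ∈ Finset.Icc 1 (n - 1), ((n.choose p : ℚ))⁻¹ :=
          (Finset.mul_sum _ _ _).symm
  · refine ⟨4, by norm_num, ?_⟩
    intro n hn
    classical
    have hD : Nat.card {σ : Equiv.Perm (Fin n) // Decomposable n σ} ≤ 4 * (n - 1).factorial :=
      le_trans (D_le_sum n) (sum_bound n hn)
    have hcompl : Nat.card {σ : Equiv.Perm (Fin n) // ¬ Decomposable n σ} =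
        n.factorial - Nat.card {σ : Equiv.Perm (Fin n) // Decomposable n σ} := by
      rw [Nat.card_eq_fintype_card, Nat.card_eq_fintype_card, Fintype.card_subtype_compl,
        Fintype.card_perm, Fintype.card_fin]
    have hDle : Nat.card {σ : Equiv.Perm (Fin n) // Decomposable n σ} ≤ n.factorial := by
      rw [Nat.card_eq_fintype_card]
      calc Fintype.card {σ : Equiv.Perm (Fin n) // Decomposable n σ}
          ≤ Fintype.card (Equiv.Perm (Fin n)) := Fintype.card_subtype_le _
        _ = n.factorial := by rw [Fintype.card_perm, Fintype.card_fin]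
    have hfacn : (n.factorial : ℚ) = (n : ℚ) * ((n - 1).factorial : ℚ) := by
      have : n.factorial = n * (n - 1).factorial := by
        conv_lhs => rw [show n = (n - 1) + 1 by omega]
        rw [Nat.factorial_succ]
        congr 1 <;> omega
      exact_mod_cast this
    have hn0 : (0 : ℚ) < (n : ℚ) := by positivity
    rw [hcompl, Nat.cast_sub hDle]
    have hDq : (Nat.card {σ : Equiv.Perm (Fin n) // Decomposable n σ} : ℚ)
        ≤ 4 * ((n - 1).factorial : ℚ) := by exact_mod_cast hD
    have hdiv : (4 : ℚ) / (n : ℚ) * (n.factorial : ℚ) = 4 * ((n - 1).factorial : ℚ) := by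
      rw [hfacn]
      field_simp
    have expand : (1 - 4 / (n : ℚ)) * (n.factorial : ℚ)
        = (n.factorial : ℚ) - 4 / (n : ℚ) * (n.factorial : ℚ) := by ring
    rw [expand, hdiv]
    linarith
end

section
/- For every n ≥ 5 and every k ≥ 2, the Kneser graph KG(T_n) of triangulations of a convex n-gon does not contain the kth power of a Hamiltonian cycle. -/
-- shared vertex implies no crossing
lemma shared_not_btw (n : ℕ) (a b c d : ZMod n)
    (h : c = a ∨ c = b ∨ d = a ∨ d = b) :
    ¬(NgonBtw n a c b ∧ NgonBtw n b d a) := by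
  rintro ⟨⟨h1, h2⟩, ⟨h3, h4⟩⟩
  rcases h with rfl | rfl | rfl | rfl
  · simp at h1
  · exact absurd h2 (lt_irrefl _)
  · exact absurd h4 (lt_irrefl _)
  · simp at h3

lemma diag_cond {n : ℕ} {e : Sym2 (ZMod n)} (h : IsDiagonal n e) {x y : ZMod n}
    (hxy : e = s(x, y)) : x - y ≠ 0 ∧ x - y ≠ 1 ∧ x - y ≠ -1 := by
  obtain ⟨i, j, hij, h0, h1, h2⟩ := h
  rw [hij, Sym2.eq_iff] at hxy
  rcases hxy with ⟨rfl, rfl⟩ | ⟨rfl, rfl⟩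
  · exact ⟨h0, h1, h2⟩
  · have hs : ∀ u v : ZMod n, u - v = -(v - u) := fun u v => by ring
    refine ⟨fun h => h0 ?_, fun h => h2 ?_, fun h => h1 ?_⟩
    · rw [hs, h, neg_zero]
    · rw [hs, h]
    · rw [hs, h, neg_neg]

def fanT (n : ℕ) : Finset (Sym2 (ZMod n)) :=
  (Finset.Ico 2 (n - 1)).image (fun m : ℕ => s((0 : ZMod n), (m : ZMod n)))

lemma fan_tri {n : ℕ} (hn : 5 ≤ n) : IsTriangulation n (fanT n) := by
  haveI : NeZero n := ⟨by omega⟩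
  haveI : Fact (1 < n) := ⟨by omega⟩
  have hvc : ∀ m : ℕ, m < n → ((m : ZMod n)).val = m := fun m h => ZMod.val_cast_of_lt h
  refine ⟨?_, ?_, ?_⟩
  · rw [fanT, Finset.card_image_of_injOn, Nat.card_Ico]
    · omega
    · intro m hm m' hm' h
      simp only [Finset.coe_Ico, Set.mem_Ico] at hm hm'
      rw [Sym2.eq_iff] at h
      rcases h with ⟨-, h⟩ | ⟨h, h'⟩
      · have := hvc m (by omega); have := hvc m' (by omega)
        have : ((m : ZMod n)).val = ((m' : ZMod n)).val := by rw [h]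
        omega
      · exfalso
        have h0 : ((m' : ZMod n)).val = 0 := by rw [← h]; simp
        rw [hvc m' (by omega)] at h0; omega
  · intro e he
    rw [fanT, Finset.mem_image] at he
    obtain ⟨m, hm, rfl⟩ := he
    simp only [Finset.mem_Ico] at hm
    have hmv := hvc m (by omega)
    refine ⟨0, (m : ZMod n), rfl, ?_, ?_, ?_⟩
    · rw [zero_sub, ne_eq, neg_eq_zero]
      intro h; rw [h, ZMod.val_zero] at hmv; omega
    · rw [zero_sub]
      intro h
      have : (m : ZMod n) = -1 := by rw [← neg_neg (m : ZMod n), h]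
      have hv1 : ((m : ZMod n)).val = (-1 : ZMod n).val := by rw [this]
      rw [hmv, ZMod.neg_val, ZMod.val_one] at hv1
      simp only [one_ne_zero, if_false] at hv1
      omega
    · rw [zero_sub, ne_eq, neg_eq_iff_eq_neg, neg_neg]
      intro h
      have hv1 : ((m : ZMod n)).val = (1 : ZMod n).val := by rw [h]
      rw [hmv, ZMod.val_one] at hv1; omega
  · intro e he f hf hcross
    rw [fanT, Finset.mem_image] at he hf
    obtain ⟨m, hm, rfl⟩ := he
    obtain ⟨m', hm', rfl⟩ := hf
    obtain ⟨a, b, c, d, hab, hcd, hb1, hb2⟩ := hcross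
    rw [Sym2.eq_iff] at hab hcd
    have h0ab : 0 = a ∨ 0 = b := by
      rcases hab with ⟨h1, -⟩ | ⟨h1, -⟩
      exacts [Or.inl h1, Or.inr h1]
    have h0cd : 0 = c ∨ 0 = d := by
      rcases hcd with ⟨h1, -⟩ | ⟨h1, -⟩
      exacts [Or.inl h1, Or.inr h1]
    apply shared_not_btw n a b c d _ ⟨hb1, hb2⟩
    rcases h0ab with ha | hb <;> rcases h0cd with hc | hd
    · exact Or.inl (hc ▸ ha ▸ rfl)
    · exact Or.inr (Or.inr (Or.inl (hd ▸ ha ▸ rfl)))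
    · exact Or.inr (Or.inl (hc ▸ hb ▸ rfl))
    · exact Or.inr (Or.inr (Or.inr (hd ▸ hb ▸ rfl)))

theorem nc_bound : ∀ (d a b : ℕ) (S : Finset (ℕ × ℕ)),
    b - a ≤ d →
    (∀ p ∈ S, a ≤ p.1 ∧ p.1 + 2 ≤ p.2 ∧ p.2 ≤ b ∧ p ≠ (a, b)) →
    (∀ p ∈ S, ∀ q ∈ S, ¬(p.1 < q.1 ∧ q.1 < p.2 ∧ p.2 < q.2)) →
    S.card ≤ b - a - 2 := by
  intro d
  induction d using Nat.strong_induction_on with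
  | _ d IH =>
    intro a b S hd hmem hnc
    rcases S.eq_empty_or_nonempty with rfl | hS
    · simp
    obtain ⟨p, hp, hpmax⟩ := S.exists_max_image (fun q => q.2 - q.1) hS
    set i := p.1 with hi
    set j := p.2 with hj
    obtain ⟨hai, hij, hjb, hpne⟩ := hmem p hp
    have hpne' : ¬(i = a ∧ j = b) := by
      rintro ⟨h1, h2⟩; exact hpne (Prod.ext h1 h2)
    have hba : a + 2 ≤ b := by omega
    have hzone : ∀ q ∈ S, q.2 ≤ i ∨ (i ≤ q.1 ∧ q.2 ≤ j) ∨ j ≤ q.1 := by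
      intro q hq
      obtain ⟨haq, hq12, hqb, hqne⟩ := hmem q hq
      have hmax := hpmax q hq
      have h1 := hnc p hp q hq
      have h2 := hnc q hq p hp
      by_contra hcon
      push_neg at hcon
      obtain ⟨hA, hB, hC⟩ := hcon
      rcases lt_or_ge q.1 i with hx | hx
      · rcases lt_or_ge q.2 j with hy | hy
        · exact h2 ⟨hx, by omega, hy⟩
        · omega
      · rcases le_or_gt q.2 j with hy | hy
        · omega
        · rcases lt_or_ge q.1 j with hxx | hxx
          · rcases eq_or_lt_of_le hx with h | h
            · omega
            · exact h1 ⟨h, hxx, hy⟩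
          · omega
    classical
    set A := S.filter (fun q => q.2 ≤ i) with hA
    set B := S.filter (fun q => ¬ q.2 ≤ i ∧ q.2 ≤ j) with hB
    set C := S.filter (fun q => ¬ q.2 ≤ i ∧ ¬ q.2 ≤ j) with hC
    have hBC : B ∪ C = S.filter (fun q => ¬ q.2 ≤ i) := by
      rw [hB, hC, ← Finset.filter_or]
      apply Finset.filter_congr
      intro q hq
      constructor
      · rintro (⟨h1, _⟩ | ⟨h1, _⟩) <;> exact h1
      · intro h1
        by_cases h2 : q.2 ≤ j
        · exact Or.inl ⟨h1, h2⟩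
        · exact Or.inr ⟨h1, h2⟩
    have hBCdisj : Disjoint B C := by
      rw [Finset.disjoint_left]
      intro q hqB hqC
      exact (Finset.mem_filter.mp hqC).2.2 (Finset.mem_filter.mp hqB).2.2
    have hcard : S.card = A.card + B.card + C.card := by
      have h1 := Finset.card_filter_add_card_filter_not (s := S)
        (p := fun q : ℕ × ℕ => q.2 ≤ i)
      have h2 := Finset.card_union_of_disjoint hBCdisj
      rw [hBC] at h2
      rw [hA]
      omega
    -- bound A
    have hAcard : A.card ≤ (i - a - 2) + 1 := by
      have h := IH (i - a) (by omega) a i (A.erase (a, i)) le_rfl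
        (by
          intro q hq
          have hq' : q ∈ A := Finset.mem_of_mem_erase hq
          have hqS : q ∈ S := Finset.mem_of_mem_filter q hq'
          have hzi : q.2 ≤ i := (Finset.mem_filter.mp hq').2
          obtain ⟨h1, h2, _, _⟩ := hmem q hqS
          exact ⟨h1, h2, hzi, Finset.ne_of_mem_erase hq⟩)
        (by
          intro x hx y hy
          exact hnc x (Finset.mem_of_mem_filter x (Finset.mem_of_mem_erase hx))
            y (Finset.mem_of_mem_filter y (Finset.mem_of_mem_erase hy)))
      have h2 := Finset.pred_card_le_card_erase (s := A) (a := ((a, i) : ℕ × ℕ))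
      omega
    have hA0 : A.card = 0 ∨ a + 2 ≤ i := by
      rcases A.eq_empty_or_nonempty with h | ⟨q, hq⟩
      · left; simp [h]
      · right
        have hqS : q ∈ S := Finset.mem_of_mem_filter q hq
        have hzi : q.2 ≤ i := (Finset.mem_filter.mp hq).2
        obtain ⟨h1, h2, _, _⟩ := hmem q hqS
        omega
    -- bound C
    have hCcard : C.card ≤ (b - j - 2) + 1 := by
      have h := IH (b - j) (by omega) j b (C.erase (j, b)) le_rfl
        (by
          intro q hq
          have hq' : q ∈ C := Finset.mem_of_mem_erase hq
          have hqS : q ∈ S := Finset.mem_of_mem_filter q hq'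
          have hzi : j ≤ q.1 := by
            rcases hzone q hqS with h | h | h
            · exact absurd h (Finset.mem_filter.mp hq').2.1
            · exact absurd h.2 (Finset.mem_filter.mp hq').2.2
            · exact h
          obtain ⟨h1, h2, h3, _⟩ := hmem q hqS
          exact ⟨hzi, h2, h3, Finset.ne_of_mem_erase hq⟩)
        (by
          intro x hx y hy
          exact hnc x (Finset.mem_of_mem_filter x (Finset.mem_of_mem_erase hx))
            y (Finset.mem_of_mem_filter y (Finset.mem_of_mem_erase hy)))
      have h2 := Finset.pred_card_le_card_erase (s := C) (a := ((j, b) : ℕ × ℕ))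
      omega
    have hC0 : C.card = 0 ∨ j + 2 ≤ b := by
      rcases C.eq_empty_or_nonempty with h | ⟨q, hq⟩
      · left; simp [h]
      · right
        have hqS : q ∈ S := Finset.mem_of_mem_filter q hq
        have hzi : j ≤ q.1 := by
          rcases hzone q hqS with h | h | h
          · exact absurd h (Finset.mem_filter.mp hq).2.1
          · exact absurd h.2 (Finset.mem_filter.mp hq).2.2
          · exact h
        obtain ⟨h1, h2, h3, _⟩ := hmem q hqS
        omega
    -- bound B
    have hpB : p ∈ B := by
      rw [hB, Finset.mem_filter]
      exact ⟨hp, by omega, le_rfl⟩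
    have hBcard : B.card ≤ (j - i - 2) + 1 := by
      have h := IH (j - i) (by omega) i j (B.erase p) le_rfl
        (by
          intro q hq
          have hq' : q ∈ B := Finset.mem_of_mem_erase hq
          have hqS : q ∈ S := Finset.mem_of_mem_filter q hq'
          obtain ⟨h1, h2, h3, _⟩ := hmem q hqS
          have hzi : i ≤ q.1 ∧ q.2 ≤ j := by
            rcases hzone q hqS with h | h | h
            · exact absurd h (Finset.mem_filter.mp hq').2.1
            · exact h
            · exact absurd (Finset.mem_filter.mp hq').2.2 (by omega)
          refine ⟨hzi.1, h2, hzi.2, fun hcon => Finset.ne_of_mem_erase hq (hcon.trans rfl)⟩)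
        (by
          intro x hx y hy
          exact hnc x (Finset.mem_of_mem_filter x (Finset.mem_of_mem_erase hx))
            y (Finset.mem_of_mem_filter y (Finset.mem_of_mem_erase hy)))
      have h2 := Finset.pred_card_le_card_erase (s := B) (a := p)
      omega
    omega

noncomputable def diagPair {n : ℕ} : Sym2 (ZMod n) → ℕ × ℕ :=
  Sym2.lift ⟨fun x y => (min x.val y.val, max x.val y.val), by
    intro x y; simp [min_comm, max_comm]⟩

lemma diagPair_mk {n : ℕ} {x y : ZMod n} (h : x.val ≤ y.val) :
    diagPair s(x, y) = (x.val, y.val) := by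
  simp [diagPair, min_eq_left h, max_eq_right h]

lemma fan_forces {n : ℕ} (hn : 5 ≤ n) {T : Finset (Sym2 (ZMod n))}
    (hT : IsTriangulation n T) (hdisj : Disjoint T (fanT n)) :
    s((1 : ZMod n), -1) ∈ T := by
  haveI : NeZero n := ⟨by omega⟩
  haveI : Fact (1 < n) := ⟨by omega⟩
  obtain ⟨hcard, hdiag, hnc⟩ := hT
  by_contra hear
  -- no diagonal of T passes through vertex 0
  have h0 : ∀ e ∈ T, ∀ x y : ZMod n, e = s(x, y) → x ≠ 0 := by
    intro e he x y hxy hx0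
    subst hx0
    obtain ⟨hd0, hd1, hd2⟩ := diag_cond (hdiag e he) hxy
    rw [zero_sub, ne_eq, neg_eq_zero] at hd0
    rw [zero_sub, ne_eq, neg_eq_iff_eq_neg, neg_neg] at hd2
    have hy2 : 2 ≤ y.val := by
      rcases Nat.lt_or_ge y.val 2 with h | h
      · interval_cases hv : y.val
        · exact absurd (by rw [← ZMod.natCast_rightInverse y, hv]; simp) hd0
        · exact absurd (by rw [← ZMod.natCast_rightInverse y, hv]; simp) hd2
      · exact h
    have hyn : y.val ≤ n - 2 := by
      rcases Nat.lt_or_ge y.val (n - 1) with h | h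
      · omega
      · exfalso
        have : y.val = n - 1 := by have := y.val_lt; omega
        apply hd1
        rw [zero_sub, ← ZMod.natCast_rightInverse y, this]
        have : ((n - 1 : ℕ) : ZMod n) = -1 := by
          have : ((n : ℕ) : ZMod n) = 0 := ZMod.natCast_self n
          push_cast [Nat.cast_sub (by omega : 1 ≤ n)] at *
          rw [this]; ring
        rw [this, neg_neg]
    have hef : e ∈ fanT n := by
      rw [fanT, Finset.mem_image]
      refine ⟨y.val, Finset.mem_Ico.mpr ⟨hy2, by omega⟩, ?_⟩
      rw [hxy, ZMod.natCast_rightInverse y]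
    exact Finset.disjoint_left.mp hdisj he hef
  -- canonical representative
  have hrep : ∀ e ∈ T, ∃ x y : ZMod n, e = s(x, y) ∧
      1 ≤ x.val ∧ x.val + 2 ≤ y.val ∧ y.val ≤ n - 1 := by
    intro e he
    obtain ⟨u, w, huw, -⟩ := hdiag e he
    have hd := diag_cond (hdiag e he) huw
    have hu0 : u ≠ 0 := h0 e he u w huw
    have hw0 : w ≠ 0 := h0 e he w u (by rw [huw, Sym2.eq_swap])
    have hu1 : 1 ≤ u.val := by
      rcases Nat.eq_zero_or_pos u.val with h | h
      · exact absurd (by rw [← ZMod.natCast_rightInverse u, h]; simp) hu0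
      · exact h
    have hw1 : 1 ≤ w.val := by
      rcases Nat.eq_zero_or_pos w.val with h | h
      · exact absurd (by rw [← ZMod.natCast_rightInverse w, h]; simp) hw0
      · exact h
    have hne : u.val ≠ w.val := by
      intro h
      exact hd.1 (by rw [sub_eq_zero]; exact ZMod.val_injective n h)
    have hgap : ∀ a b : ZMod n, a.val + 1 = b.val → b - a = 1 := by
      intro a b h
      rw [← ZMod.natCast_rightInverse b, ← ZMod.natCast_rightInverse a, ← h]
      push_cast; ring
    rcases Nat.lt_or_ge u.val w.val with h | h
    · refine ⟨u, w, huw, hu1, ?_, by have := w.val_lt; omega⟩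
      rcases Nat.lt_or_ge (u.val + 1) w.val with h2 | h2
      · omega
      · exfalso
        have : w - u = 1 := hgap u w (by omega)
        exact hd.2.2 (by rw [← neg_sub w u, this])
    · refine ⟨w, u, by rw [huw, Sym2.eq_swap], hw1, ?_, by have := u.val_lt; omega⟩
      rcases Nat.lt_or_ge (w.val + 1) u.val with h2 | h2
      · omega
      · exfalso
        have : u - w = 1 := hgap w u (by omega)
        exact hd.2.1 this
  -- val arithmetic helpers
  have hvs : ∀ a b : ZMod n, a.val ≤ b.val → (b - a).val = b.val - a.val :=
    fun a b h => ZMod.val_sub h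
  have hvneg : ∀ a b : ZMod n, a.val < b.val → (a - b).val = n - (b.val - a.val) := by
    intro a b h
    have hz : b - a ≠ 0 := by
      intro hz; rw [sub_eq_zero] at hz; rw [hz] at h; omega
    have hab : a - b = -(b - a) := by ring
    rw [hab]
    have := ZMod.neg_val (b - a)
    simp only [hz, if_false] at this
    rw [this, hvs a b h.le]
  have hcast1 : ∀ x : ZMod n, x.val = 1 → x = 1 := by
    intro x hx
    rw [← ZMod.natCast_rightInverse x, hx, Nat.cast_one]
  have hcastn1 : ∀ x : ZMod n, x.val = n - 1 → x = -1 := by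
    intro x hx
    rw [← ZMod.natCast_rightInverse x, hx]
    have h0 : ((n : ℕ) : ZMod n) = 0 := ZMod.natCast_self n
    push_cast [Nat.cast_sub (by omega : 1 ≤ n)]
    rw [h0]; ring
  -- the image of T in ℕ × ℕ
  classical
  set S := T.image diagPair with hS
  have himg : S.card = T.card := by
    rw [hS]
    apply Finset.card_image_of_injOn
    intro e1 he1 e2 he2 hfe
    obtain ⟨x1, y1, h1, -, hg1, -⟩ := hrep e1 he1
    obtain ⟨x2, y2, h2, -, hg2, -⟩ := hrep e2 he2
    rw [h1, h2, diagPair_mk (by omega), diagPair_mk (by omega), Prod.mk.injEq] at hfe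
    rw [h1, h2, ZMod.val_injective n hfe.1, ZMod.val_injective n hfe.2]
  have hmem : ∀ p ∈ S, 1 ≤ p.1 ∧ p.1 + 2 ≤ p.2 ∧ p.2 ≤ n - 1 ∧ p ≠ (1, n - 1) := by
    intro p hp
    rw [hS, Finset.mem_image] at hp
    obtain ⟨e, he, hpe⟩ := hp
    obtain ⟨x, y, hxy, hx1, hgap, hyn⟩ := hrep e he
    rw [hxy, diagPair_mk (by omega)] at hpe
    subst hpe
    refine ⟨hx1, hgap, hyn, ?_⟩
    intro hcon
    rw [Prod.mk.injEq] at hcon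
    apply hear
    have hxe : x = 1 := hcast1 x hcon.1
    have hye : y = -1 := hcastn1 y hcon.2
    rw [hxy, hxe, hye] at he
    exact he
  have hnc' : ∀ p ∈ S, ∀ q ∈ S, ¬(p.1 < q.1 ∧ q.1 < p.2 ∧ p.2 < q.2) := by
    rintro p hp q hq ⟨c1, c2, c3⟩
    rw [hS, Finset.mem_image] at hp hq
    obtain ⟨e, he, hpe⟩ := hp
    obtain ⟨f, hf, hqf⟩ := hq
    obtain ⟨x, y, hxy, hx1, hgap, hyn⟩ := hrep e he
    obtain ⟨u, w, huw, hu1, hgap', hwn⟩ := hrep f hf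
    rw [hxy, diagPair_mk (by omega)] at hpe
    rw [huw, diagPair_mk (by omega)] at hqf
    subst hpe; subst hqf
    simp only at c1 c2 c3
    apply hnc e he f hf
    refine ⟨x, y, u, w, hxy, huw, ⟨?_, ?_⟩, ⟨?_, ?_⟩⟩
    · rw [hvs x u (by omega)]; omega
    · rw [hvs x u (by omega), hvs x y (by omega)]; omega
    · rw [hvs y w (by omega)]; omega
    · rw [hvs y w (by omega), hvneg x y (by omega)]
      have := w.val_lt
      omega
  have hb := nc_bound n 1 (n - 1) S (by omega) hmem hnc'
  rw [himg, hcard] at hb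
  omega


/-- For every `n ≥ 5` and every `k ≥ 2`, the Kneser graph of triangulations of a
convex `n`-gon does not contain the `k`-th power of a Hamiltonian cycle. -/
theorem kneser_triangulations_no_ham_power (n k : ℕ) (hn : 5 ≤ n) (hk : 2 ≤ k) :
    ¬ ContainsHamPower (KGTri n) k := by
  haveI : NeZero n := ⟨by omega⟩
  rintro ⟨v, hv⟩
  set F : Triangulation n := ⟨fanT n, fan_tri hn⟩ with hF
  set i : ZMod (Nat.card (Triangulation n)) := v.symm F - 1 with hi
  have hvi1 : v (i + 1) = F := by rw [hi, sub_add_cancel, Equiv.apply_symm_apply]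
  have h1 := hv i 1 le_rfl (by omega)
  have h2 := hv i 2 (by omega) hk
  have h3 := hv (i + 1) 1 le_rfl (by omega)
  rw [Nat.cast_one] at h1 h3
  have hcast2 : ((2 : ℕ) : ZMod (Nat.card (Triangulation n))) = 1 + 1 := by push_cast; ring
  rw [hcast2, ← add_assoc] at h2
  rw [hvi1] at h1 h3
  have d1 : Disjoint (v i).1 (fanT n) := h1.2
  have d3 : Disjoint (fanT n) (v (i + 1 + 1)).1 := h3.2
  have m1 : s((1 : ZMod n), -1) ∈ (v i).1 := fan_forces hn (v i).2 d1
  have m3 : s((1 : ZMod n), -1) ∈ (v (i + 1 + 1)).1 :=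
    fan_forces hn (v (i + 1 + 1)).2 d3.symm
  exact (Finset.disjoint_left.mp h2.2 m1) m3
end
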